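/- arXiv:1709.07996 — 2 statements merged into one kernel-verified Lean document; each statement's English description precedes it below -/
import Mathlib

section
/- Let y ∈ Ĩ_n and w ∈ A(y). If i ∈ ℤ and b = w⁻¹(i) > w⁻¹(i+1) = a, then (a,b) is a 2-cycle of y, i.e., (a,b) ∈ C(y). -/
open Finset

/-- `w` is an element of the affine symmetric group `S̃_n`: a bijection `ℤ → ℤ` with
`w (i + n) = w i + n` for all `i` and `∑_{i=1}^n w i = n (n+1)/2`. -/
def IsAffine (n : ℕ) (w : Equiv.Perm ℤ) : Prop :=
  (∀ i : ℤ, w (i + n) = w i + n) ∧ ∑ i ∈ Finset.Icc (1 : ℤ) (n : ℤ), (w i - i) = 0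

/-- The Coxeter length of `w ∈ S̃_n`: the number of inversions `(i, j)`, `i < j`,
`w i > w j`, counted up to the equivalence `(i,j) ∼ (i+n, j+n)` (representatives with
`i ∈ [n]`). -/
noncomputable def affLen (n : ℕ) (w : Equiv.Perm ℤ) : ℕ :=
  Nat.card {p : ℤ × ℤ // 1 ≤ p.1 ∧ p.1 ≤ (n : ℤ) ∧ p.1 < p.2 ∧ w p.2 < w p.1}

/-- The absolute length of an involution `z ∈ Ĩ_n`: the number of 2-cycles
`(i, j)` with `i < j = z i`, counted up to the equivalence `(i,j) ∼ (i+n, j+n)`. -/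
noncomputable def absLen (n : ℕ) (z : Equiv.Perm ℤ) : ℕ :=
  Nat.card {p : ℤ × ℤ // 1 ≤ p.1 ∧ p.1 ≤ (n : ℤ) ∧ p.1 < p.2 ∧ z p.1 = p.2}

/-- The underlying function of the reflection `t_{i j}`: it sends `i + m n ↦ j + m n` and
`j + m n ↦ i + m n` for all `m`, fixing everything else. -/
def tFun (n : ℕ) (i j x : ℤ) : ℤ :=
  if (n : ℤ) ∣ x - i then x + (j - i) else if (n : ℤ) ∣ x - j then x - (j - i) else x

theorem tFun_comp (n : ℕ) (i j x : ℤ) : tFun n j i (tFun n i j x) = x := by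
  unfold tFun
  by_cases h1 : (n : ℤ) ∣ x - i
  · rw [if_pos h1]
    have c1 : (n : ℤ) ∣ x + (j - i) - j := by
      have e : x + (j - i) - j = x - i := by ring
      rw [e]; exact h1
    rw [if_pos c1]; ring
  · rw [if_neg h1]
    by_cases h2 : (n : ℤ) ∣ x - j
    · rw [if_pos h2]
      have c1 : ¬ (n : ℤ) ∣ x - (j - i) - j := by
        intro hc
        apply h1
        have e : x - i = 2 * (x - j) - (x - (j - i) - j) := by ring
        rw [e]
        exact dvd_sub (Dvd.dvd.mul_left h2 2) hc
      have c2 : (n : ℤ) ∣ x - (j - i) - i := by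
        have e : x - (j - i) - i = x - j := by ring
        rw [e]; exact h2
      rw [if_neg c1, if_pos c2]; ring
    · simp only [if_neg h1, if_neg h2]

/-- The reflection `t_{i j} ∈ S̃_n`. -/
def tPerm (n : ℕ) (i j : ℤ) : Equiv.Perm ℤ :=
  ⟨tFun n i j, tFun n j i, fun x => tFun_comp n i j x, fun x => tFun_comp n j i x⟩

/-- The simple generator `s_i = t_{i, i+1} ∈ S̃_n`. -/
def sPerm (n : ℕ) (i : ℤ) : Equiv.Perm ℤ := tPerm n i (i + 1)

/-- `D` is the Demazure (0-Hecke) product on the affine symmetric group `S̃_n`: the unique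
associative product with `w ∘ s_i = w` if `ℓ(w s_i) < ℓ(w)` and `w ∘ s_i = w s_i` if
`ℓ(w s_i) > ℓ(w)`. -/
def IsDemazure (n : ℕ) (D : Equiv.Perm ℤ → Equiv.Perm ℤ → Equiv.Perm ℤ) : Prop :=
  (∀ u v w : Equiv.Perm ℤ, IsAffine n u → IsAffine n v → IsAffine n w →
    D (D u v) w = D u (D v w)) ∧
  (∀ u v : Equiv.Perm ℤ, IsAffine n u → IsAffine n v → IsAffine n (D u v)) ∧
  (∀ w : Equiv.Perm ℤ, IsAffine n w → D w 1 = w ∧ D 1 w = w) ∧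
  (∀ w : Equiv.Perm ℤ, IsAffine n w → ∀ i : ℤ,
    (affLen n (w * sPerm n i) < affLen n w → D w (sPerm n i) = w) ∧
    (affLen n w < affLen n (w * sPerm n i) → D w (sPerm n i) = w * sPerm n i))

/-- `w` is an atom of the involution `z ∈ Ĩ_n` (relative to the Demazure product `D`):
`w` has minimal length among all `v ∈ S̃_n` with `z = v⁻¹ ∘ v`. -/
def IsAtomOf (n : ℕ) (D : Equiv.Perm ℤ → Equiv.Perm ℤ → Equiv.Perm ℤ)
    (z w : Equiv.Perm ℤ) : Prop :=
  IsAffine n w ∧ D w⁻¹ w = z ∧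
    ∀ v : Equiv.Perm ℤ, IsAffine n v → D v⁻¹ v = z → affLen n w ≤ affLen n v

namespace AtomAux


variable {n : ℕ}

lemma ndvd_one (hn : 2 ≤ n) : ¬ (n:ℤ) ∣ 1 := by
  intro h
  have := Int.le_of_dvd one_pos h
  omega

lemma dvd_congr_arg {a b : ℤ} (h : (n:ℤ) ∣ a) (e : b = a) : (n:ℤ) ∣ b := e ▸ h

lemma sPerm_def (i x : ℤ) : sPerm n i x = tFun n i (i+1) x := rfl

lemma sPerm_apply_dvd {i x : ℤ} (h : (n:ℤ) ∣ x - i) : sPerm n i x = x + 1 := by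
  rw [sPerm_def, tFun, if_pos h]; ring

lemma dvd_excl (hn : 2 ≤ n) {i x : ℤ} (h : (n:ℤ) ∣ x - (i+1)) : ¬ (n:ℤ) ∣ x - i := by
  intro hc
  apply ndvd_one hn
  have e : (1:ℤ) = (x - i) - (x - (i+1)) := by ring
  rw [e]; exact dvd_sub hc h

lemma sPerm_apply_dvd' (hn : 2 ≤ n) {i x : ℤ} (h : (n:ℤ) ∣ x - (i+1)) :
    sPerm n i x = x - 1 := by
  rw [sPerm_def, tFun, if_neg (dvd_excl hn h), if_pos h]; ring

lemma sPerm_apply_ndvd {i x : ℤ} (h1 : ¬ (n:ℤ) ∣ x - i) (h2 : ¬ (n:ℤ) ∣ x - (i+1)) :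
    sPerm n i x = x := by
  rw [sPerm_def, tFun, if_neg h1, if_neg h2]

lemma sPerm_cases (hn : 2 ≤ n) (i x : ℤ) :
    ((n:ℤ) ∣ x - i ∧ sPerm n i x = x + 1) ∨
    ((n:ℤ) ∣ x - (i+1) ∧ sPerm n i x = x - 1) ∨
    (¬ (n:ℤ) ∣ x - i ∧ ¬ (n:ℤ) ∣ x - (i+1) ∧ sPerm n i x = x) := by
  by_cases h1 : (n:ℤ) ∣ x - i
  · exact Or.inl ⟨h1, sPerm_apply_dvd h1⟩
  · by_cases h2 : (n:ℤ) ∣ x - (i+1)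
    · exact Or.inr (Or.inl ⟨h2, sPerm_apply_dvd' hn h2⟩)
    · exact Or.inr (Or.inr ⟨h1, h2, sPerm_apply_ndvd h1 h2⟩)

lemma sPerm_inv (hn : 2 ≤ n) (i : ℤ) : (sPerm n i)⁻¹ = sPerm n i := by
  apply Equiv.ext
  intro x
  show tFun n (i+1) i x = tFun n i (i+1) x
  by_cases h1 : (n:ℤ) ∣ x - i
  · have h2 : ¬ (n:ℤ) ∣ x - (i+1) := fun hc => (dvd_excl hn hc) h1
    rw [tFun, if_neg h2, if_pos h1, tFun, if_pos h1]; ring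
  · by_cases h2 : (n:ℤ) ∣ x - (i+1)
    · rw [tFun, if_pos h2, tFun, if_neg h1, if_pos h2]; ring
    · rw [tFun, if_neg h2, if_neg h1, tFun, if_neg h1, if_neg h2]

lemma sPerm_sq (hn : 2 ≤ n) (i : ℤ) : sPerm n i * sPerm n i = 1 := by
  nth_rewrite 1 [← sPerm_inv hn i]
  exact inv_mul_cancel _

lemma sPerm_sq_apply (hn : 2 ≤ n) (i x : ℤ) : sPerm n i (sPerm n i x) = x := by
  have h := sPerm_sq hn i
  calc sPerm n i (sPerm n i x) = (sPerm n i * sPerm n i) x := rfl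
  _ = x := by rw [h]; rfl

lemma sPerm_per (hn : 2 ≤ n) (i x : ℤ) : sPerm n i (x + n) = sPerm n i x + n := by
  rcases sPerm_cases hn i x with ⟨h, e⟩ | ⟨h, e⟩ | ⟨h1, h2, e⟩
  · rw [e, sPerm_apply_dvd (dvd_congr_arg (dvd_add h (dvd_refl (n:ℤ))) (by ring))]; ring
  · rw [e, sPerm_apply_dvd' hn (dvd_congr_arg (dvd_add h (dvd_refl (n:ℤ))) (by ring))]; ring
  · have h1' : ¬ (n:ℤ) ∣ x + n - i := fun hc =>
      h1 (dvd_congr_arg (dvd_sub hc (dvd_refl (n:ℤ))) (by ring))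
    have h2' : ¬ (n:ℤ) ∣ x + n - (i+1) := fun hc =>
      h2 (dvd_congr_arg (dvd_sub hc (dvd_refl (n:ℤ))) (by ring))
    rw [e, sPerm_apply_ndvd h1' h2']

lemma sPerm_self (i : ℤ) : sPerm n i i = i + 1 := sPerm_apply_dvd (by simp)

lemma sPerm_self' (hn : 2 ≤ n) (i : ℤ) : sPerm n i (i+1) = i := by
  rw [sPerm_apply_dvd' hn (by simp)]; ring

/-- The order behavior of `sPerm` on a pair `p < q`. -/
lemma sPerm_order (hn : 2 ≤ n) {j p q : ℤ} (hpq : p < q) :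
    sPerm n j p < sPerm n j q ∨
      (q = p + 1 ∧ (n:ℤ) ∣ p - j ∧ sPerm n j p = q ∧ sPerm n j q = p) := by
  have hn2 : (2:ℤ) ≤ (n:ℤ) := by exact_mod_cast hn
  rcases sPerm_cases hn j p with ⟨h1, e1⟩ | ⟨h1, e1⟩ | ⟨h1a, h1b, e1⟩ <;>
    rcases sPerm_cases hn j q with ⟨h2, e2⟩ | ⟨h2, e2⟩ | ⟨h2a, h2b, e2⟩
  · -- p ≡ j, q ≡ j
    have hd : (n:ℤ) ∣ q - p := dvd_congr_arg (dvd_sub h2 h1) (by ring)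
    have := Int.le_of_dvd (by omega) hd
    left; omega
  · -- p ≡ j, q ≡ j+1
    by_cases hq : q = p + 1
    · exact Or.inr ⟨hq, h1, by omega, by omega⟩
    · have hd : (n:ℤ) ∣ q - p - 1 := dvd_congr_arg (dvd_sub h2 h1) (by ring)
      rcases Int.lt_or_lt_of_ne (fun hc : q - p - 1 = 0 => hq (by omega)) with hlt | hgt
      · have := Int.le_of_dvd (by omega) (dvd_neg.mpr hd); left; omega
      · have := Int.le_of_dvd hgt hd; left; omega
  · -- p ≡ j, q generic : q ≠ p+1 since p+1 ≡ j+1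
    have hq : q ≠ p + 1 := fun hc => h2b (dvd_congr_arg h1 (by omega))
    left; omega
  · -- p ≡ j+1, q ≡ j
    left; omega
  · -- p ≡ j+1, q ≡ j+1
    have hd : (n:ℤ) ∣ q - p := dvd_congr_arg (dvd_sub h2 h1) (by ring)
    have := Int.le_of_dvd (by omega) hd
    left; omega
  · left; omega
  · -- p generic, q ≡ j
    left; omega
  · -- p generic, q ≡ j+1 : q ≠ p+1 since otherwise p ≡ j
    have hq : q ≠ p + 1 := fun hc => h1a (dvd_congr_arg h2 (by omega))
    left; omega
  · left; omega




theorem Equiv.Perm.apply_inv_self {α : Type*} (f : Equiv.Perm α) (x : α) : f (f⁻¹ x) = x :=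
  (Equiv.eq_symm_apply f).mp rfl

theorem Equiv.Perm.inv_apply_self {α : Type*} (f : Equiv.Perm α) (x : α) : f⁻¹ (f x) = x :=
  Equiv.Perm.inv_eq_iff_eq.mpr rfl

lemma fper {f : ℤ → ℤ} {c : ℤ} (hf : ∀ x : ℤ, f (x + n) = f x + c) (x k : ℤ) :
    f (x + k * n) = f x + k * c := by
  induction k using Int.induction_on with
  | zero => simp
  | succ m ih =>
      have e : x + ((m:ℤ) + 1) * n = (x + m * n) + n := by ring
      rw [e, hf, ih]; ring
  | pred m ih =>
      have h := hf (x + (-(m:ℤ) - 1) * n)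
      have e : x + (-(m:ℤ) - 1) * n + n = x + (-(m:ℤ)) * n := by ring
      rw [e, ih] at h
      have e2 : f (x + (-(m:ℤ) - 1) * n) = f x + (-(m:ℤ)) * c - c := by omega
      rw [e2]; ring

lemma per_mul {w : Equiv.Perm ℤ} (hw : ∀ x : ℤ, w (x + n) = w x + n) (x k : ℤ) :
    w (x + k * n) = w x + k * n := fper hw x k

lemma per_shift {w : Equiv.Perm ℤ} (hw : ∀ x : ℤ, w (x + n) = w x + n) {p q : ℤ}
    (h : (n:ℤ) ∣ p - q) : w p = w q + (p - q) := by
  obtain ⟨k, hk⟩ := h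
  have hp : p = q + k * n := by rw [mul_comm] at hk; omega
  rw [hp, per_mul hw]
  omega

lemma fper_dvd {f : ℤ → ℤ} (hf : ∀ x : ℤ, f (x + n) = f x) {p q : ℤ}
    (h : (n:ℤ) ∣ p - q) : f p = f q := by
  obtain ⟨k, hk⟩ := h
  have hp : p = q + k * n := by rw [mul_comm] at hk; omega
  have h0 : ∀ x : ℤ, f (x + n) = f x + 0 := fun x => by rw [hf x, add_zero]
  have := fper h0 q k
  rw [hp, this]; ring

lemma per_inv {w : Equiv.Perm ℤ} (hw : ∀ x : ℤ, w (x + n) = w x + n) (x : ℤ) :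
    w⁻¹ (x + n) = w⁻¹ x + n := by
  apply w.injective
  rw [Equiv.Perm.apply_inv_self, hw, Equiv.Perm.apply_inv_self]

/-- canonical representative in the window `[1, n]` -/
lemma rep_spec (hn : 0 < n) (p : ℤ) :
    1 ≤ (p - 1) % (n:ℤ) + 1 ∧ (p - 1) % (n:ℤ) + 1 ≤ (n:ℤ) ∧
      (n:ℤ) ∣ p - ((p - 1) % (n:ℤ) + 1) := by
  have hn0 : (n:ℤ) ≠ 0 := by positivity
  have h1 := Int.emod_nonneg (p - 1) hn0
  have h2 := Int.emod_lt_of_pos (p - 1) (by positivity : (0:ℤ) < n)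
  refine ⟨by omega, by omega, ?_⟩
  have h3 := Int.mul_ediv_add_emod (p - 1) (n:ℤ)
  exact ⟨(p-1)/(n:ℤ), by omega⟩

lemma dvd_small_eq (hn : 0 < n) {a b : ℤ} (h : (n:ℤ) ∣ a - b) (h1 : -(n:ℤ) < a - b)
    (h2 : a - b < n) : a = b := by
  rcases eq_or_ne (a - b) 0 with he | hne
  · omega
  · rcases hne.lt_or_gt with hl | hl
    · have := Int.le_of_dvd (by omega) (dvd_neg.mpr h)
      omega
    · have := Int.le_of_dvd hl h
      omega

lemma rep_unique (hn : 0 < n) {a b : ℤ} (ha1 : 1 ≤ a) (ha2 : a ≤ (n:ℤ)) (hb1 : 1 ≤ b)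
    (hb2 : b ≤ (n:ℤ)) (h : (n:ℤ) ∣ a - b) : a = b :=
  dvd_small_eq hn h (by omega) (by omega)

lemma dvd_sub_rev {a b : ℤ} (h : (n:ℤ) ∣ a - b) : (n:ℤ) ∣ b - a := by
  rw [← neg_sub]; exact dvd_neg.mpr h

/-- Sum of a periodic function over a window is invariant under composition with an
affine permutation. -/
lemma sum_periodic_comp (hn : 0 < n) {v : Equiv.Perm ℤ}
    (hv : ∀ x : ℤ, v (x + n) = v x + n) (f : ℤ → ℤ) (hf : ∀ x : ℤ, f (x + n) = f x) :
    ∑ x ∈ Icc (1:ℤ) (n:ℤ), f (v x) = ∑ x ∈ Icc (1:ℤ) (n:ℤ), f x := by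
  apply Finset.sum_nbij' (fun x => (v x - 1) % (n:ℤ) + 1) (fun x => (v⁻¹ x - 1) % (n:ℤ) + 1)
  · intro a _
    have h := rep_spec hn (v a)
    rw [mem_Icc]
    exact ⟨h.1, h.2.1⟩
  · intro a _
    have h := rep_spec hn (v⁻¹ a)
    rw [mem_Icc]
    exact ⟨h.1, h.2.1⟩
  · intro a ha
    rw [mem_Icc] at ha
    have hs := rep_spec hn (v a)
    have hinv : v⁻¹ ((v a - 1) % (n:ℤ) + 1) =
        a + (((v a - 1) % (n:ℤ) + 1) - v a) := by
      have h := per_shift (per_inv hv) (p := (v a - 1) % (n:ℤ) + 1) (q := v a)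
        (dvd_sub_rev hs.2.2)
      rw [h, Equiv.Perm.inv_apply_self]
    rw [hinv]
    obtain ⟨k, hk⟩ := hs.2.2
    have e : a + ((v a - 1) % (n:ℤ) + 1 - v a) - 1 = (a - 1) + (n:ℤ) * (-k) := by
      rw [mul_neg]; omega
    rw [e, Int.add_mul_emod_self_left]
    have : (a - 1) % (n:ℤ) = a - 1 := Int.emod_eq_of_lt (by omega) (by omega)
    omega
  · intro a ha
    rw [mem_Icc] at ha
    have hs := rep_spec hn (v⁻¹ a)
    have hval : v ((v⁻¹ a - 1) % (n:ℤ) + 1) =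
        a + (((v⁻¹ a - 1) % (n:ℤ) + 1) - v⁻¹ a) := by
      have h := per_shift hv (p := (v⁻¹ a - 1) % (n:ℤ) + 1) (q := v⁻¹ a)
        (dvd_sub_rev hs.2.2)
      rw [h, Equiv.Perm.apply_inv_self]
    rw [hval]
    obtain ⟨k, hk⟩ := hs.2.2
    have e : a + ((v⁻¹ a - 1) % (n:ℤ) + 1 - v⁻¹ a) - 1 = (a - 1) + (n:ℤ) * (-k) := by
      rw [mul_neg]; omega
    rw [e, Int.add_mul_emod_self_left]
    have : (a - 1) % (n:ℤ) = a - 1 := Int.emod_eq_of_lt (by omega) (by omega)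
    omega
  · intro a _
    exact fper_dvd hf (rep_spec hn (v a)).2.2

lemma isAffine_one : IsAffine n 1 := by
  constructor
  · intro i; rfl
  · simp

lemma isAffine_mul (hn : 0 < n) {u v : Equiv.Perm ℤ} (hu : IsAffine n u) (hv : IsAffine n v) :
    IsAffine n (u * v) := by
  constructor
  · intro x
    show u (v (x + n)) = u (v x) + n
    rw [hv.1, hu.1]
  · have key : ∑ x ∈ Icc (1:ℤ) (n:ℤ), (u (v x) - v x) = ∑ x ∈ Icc (1:ℤ) (n:ℤ), (u x - x) :=
      sum_periodic_comp hn hv.1 (fun x => u x - x)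
        (fun x => by show u (x+n) - (x+(n:ℤ)) = u x - x; rw [hu.1]; ring)
    calc ∑ x ∈ Icc (1:ℤ) (n:ℤ), ((u * v) x - x)
        = ∑ x ∈ Icc (1:ℤ) (n:ℤ), ((u (v x) - v x) + (v x - x)) := by
          apply Finset.sum_congr rfl; intro x _
          show u (v x) - x = _; ring
      _ = (∑ x ∈ Icc (1:ℤ) (n:ℤ), (u (v x) - v x)) + ∑ x ∈ Icc (1:ℤ) (n:ℤ), (v x - x) :=
          Finset.sum_add_distrib
      _ = 0 := by rw [key, hu.2, hv.2]; norm_num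

lemma isAffine_inv (hn : 0 < n) {v : Equiv.Perm ℤ} (hv : IsAffine n v) :
    IsAffine n v⁻¹ := by
  constructor
  · exact per_inv hv.1
  · have key : ∑ x ∈ Icc (1:ℤ) (n:ℤ), (v⁻¹ (v x) - (v x)) =
        ∑ x ∈ Icc (1:ℤ) (n:ℤ), (v⁻¹ x - x) :=
      sum_periodic_comp hn hv.1 (fun x => v⁻¹ x - x)
        (fun x => by show v⁻¹ (x+n) - (x+(n:ℤ)) = v⁻¹ x - x; rw [per_inv hv.1]; ring)
    have e : ∑ x ∈ Icc (1:ℤ) (n:ℤ), (v⁻¹ (v x) - (v x)) =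
        - ∑ x ∈ Icc (1:ℤ) (n:ℤ), (v x - x) := by
      rw [← Finset.sum_neg_distrib]
      apply Finset.sum_congr rfl; intro x _
      rw [Equiv.Perm.inv_apply_self]; ring
    rw [e, hv.2, neg_zero] at key
    exact key.symm





/-- Shift taking `p` to its representative in `[1, n]`. -/
def nsh (n : ℕ) (p : ℤ) : ℤ := p - ((p - 1) % (n:ℤ) + 1)

lemma nsh_dvd (hn : 0 < n) (p : ℤ) : (n:ℤ) ∣ nsh n p := (rep_spec hn p).2.2

lemma nsh_bounds (hn : 0 < n) (p : ℤ) : 1 ≤ p - nsh n p ∧ p - nsh n p ≤ (n:ℤ) := by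
  have h := rep_spec hn p
  unfold nsh
  omega

/-- The set of inversions of `v` with first coordinate in the window `[1,n]`. -/
def InvSet (n : ℕ) (v : Equiv.Perm ℤ) : Set (ℤ × ℤ) :=
  {p : ℤ × ℤ | 1 ≤ p.1 ∧ p.1 ≤ (n : ℤ) ∧ p.1 < p.2 ∧ v p.2 < v p.1}

lemma affLen_eq_ncard (v : Equiv.Perm ℤ) : affLen n v = (InvSet n v).ncard := rfl

lemma invSet_finite (hn : 0 < n) {v : Equiv.Perm ℤ}
    (hv : ∀ x : ℤ, v (x + n) = v x + n) : (InvSet n v).Finite := by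
  classical
  have hne : (Finset.Icc (1:ℤ) (n:ℤ)).Nonempty :=
    ⟨1, by rw [mem_Icc]; exact ⟨le_refl _, by exact_mod_cast hn⟩⟩
  set m := ((Finset.Icc (1:ℤ) (n:ℤ)).image (fun x => v x - x)).min' (hne.image _) with hm
  set M := ((Finset.Icc (1:ℤ) (n:ℤ)).image (fun x => v x)).max' (hne.image _) with hM
  apply Set.Finite.subset (Set.finite_Icc ((1:ℤ), (2:ℤ)) ((n:ℤ), M - m))
  rintro ⟨p, q⟩ ⟨h1, h2, h3, h4⟩
  dsimp only at h1 h2 h3 h4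
  simp only [Set.mem_Icc, Prod.mk_le_mk]
  have hq : m ≤ v q - q := by
    have hr := rep_spec hn q
    have : v q = v ((q-1) % (n:ℤ) + 1) + (q - ((q-1) % (n:ℤ) + 1)) := per_shift hv hr.2.2
    have hmem : v ((q-1) % (n:ℤ) + 1) - ((q-1) % (n:ℤ) + 1) ∈
        ((Finset.Icc (1:ℤ) (n:ℤ)).image (fun x => v x - x)) :=
      Finset.mem_image_of_mem _ (by rw [mem_Icc]; exact ⟨hr.1, hr.2.1⟩)
    have := Finset.min'_le _ _ hmem
    omega
  have hp : v p ≤ M := by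
    have hmem : v p ∈ ((Finset.Icc (1:ℤ) (n:ℤ)).image (fun x => v x)) :=
      Finset.mem_image_of_mem _ (by rw [mem_Icc]; exact ⟨h1, h2⟩)
    exact Finset.le_max' _ _ hmem
  exact ⟨⟨h1, by omega⟩, h2, by omega⟩

/-- Normalizing a (shifted) inversion into the window produces a member of `InvSet`. -/
lemma nrm_mem (hn : 0 < n) {v : Equiv.Perm ℤ} (hv : ∀ x : ℤ, v (x + n) = v x + n)
    {p q : ℤ} (hpq : p < q) (hinv : v q < v p) :
    (p - nsh n p, q - nsh n p) ∈ InvSet n v := by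
  have hb := nsh_bounds hn p
  have hd := nsh_dvd hn p
  refine ⟨hb.1, hb.2, by omega, ?_⟩
  have e1 : v (p - nsh n p) = v p + ((p - nsh n p) - p) :=
    per_shift hv (by rw [show p - nsh n p - p = -(nsh n p) by ring]; exact dvd_neg.mpr hd)
  have e2 : v (q - nsh n p) = v q + ((q - nsh n p) - q) :=
    per_shift hv (by rw [show q - nsh n p - q = -(nsh n p) by ring]; exact dvd_neg.mpr hd)
  show v (q - nsh n p) < v (p - nsh n p)
  omega

/-- Key injectivity of the normalized `sPerm`-image map on pairs with first coordinate
in the window. -/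
lemma F_injOn (hn : 2 ≤ n) (i : ℤ) :
    Set.InjOn (fun p : ℤ×ℤ =>
      (sPerm n i p.1 - nsh n (sPerm n i p.1), sPerm n i p.2 - nsh n (sPerm n i p.1)))
      {p : ℤ×ℤ | 1 ≤ p.1 ∧ p.1 ≤ (n:ℤ)} := by
  have hn0 : 0 < n := by omega
  rintro ⟨p1, p2⟩ ⟨hp1, hp2⟩ ⟨q1, q2⟩ ⟨hq1, hq2⟩ heq
  simp only [Prod.mk.injEq] at heq
  obtain ⟨e1, e2⟩ := heq
  set c := nsh n (sPerm n i p1) with hc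
  set c' := nsh n (sPerm n i q1) with hc'
  have hdc : (n:ℤ) ∣ c - c' := dvd_sub (nsh_dvd hn0 _) (nsh_dvd hn0 _)
  have h1 : sPerm n i p1 = sPerm n i (q1 + (c - c')) := by
    rw [per_shift (sPerm_per hn i) (p := q1 + (c - c')) (q := q1) (by simpa using hdc)]
    omega
  have hp1q1 : p1 = q1 + (c - c') := (sPerm n i).injective h1
  have : p1 = q1 := dvd_small_eq hn0 (by rw [hp1q1]; simpa using hdc) (by omega) (by omega)
  have hcc : c = c' := by omega
  have h2 : sPerm n i p2 = sPerm n i q2 := by omega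
  have : p2 = q2 := (sPerm n i).injective h2
  simp only [Prod.mk.injEq]
  exact ⟨by omega, this⟩

/-- Right multiplication by `sPerm n i` at an ascent increases length. -/
lemma affLen_lt_mul_sPerm (hn : 2 ≤ n) {v : Equiv.Perm ℤ}
    (hv : ∀ x : ℤ, v (x + n) = v x + n) {i : ℤ} (hvi : v i < v (i+1)) :
    affLen n v < affLen n (v * sPerm n i) := by
  classical
  have hn0 : 0 < n := by omega
  set s := sPerm n i with hs
  have hvs : ∀ x : ℤ, (v * s) (x + n) = (v * s) x + n := by
    intro x
    show v (s (x + n)) = v (s x) + n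
    rw [hs, sPerm_per hn, hv]
  set F : ℤ×ℤ → ℤ×ℤ := fun p => (s p.1 - nsh n (s p.1), s p.2 - nsh n (s p.1)) with hF
  have hmaps : ∀ p ∈ InvSet n v, F p ∈ InvSet n (v * s) := by
    rintro ⟨p1, p2⟩ ⟨h1, h2, h3, h4⟩
    dsimp only at h1 h2 h3 h4
    have horder : s p1 < s p2 := by
      rcases sPerm_order hn (j := i) h3 with h | ⟨hq, hd, _, _⟩
      · exact h
      · exfalso
        have e1 : v p1 = v i + (p1 - i) := per_shift hv hd
        have e2 : v p2 = v (i+1) + (p1 - i) := by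
          have : v p2 = v (i+1) + (p2 - (i+1)) :=
            per_shift hv (dvd_congr_arg hd (by omega))
          omega
        omega
    have hinv : (v * s) (s p2) < (v * s) (s p1) := by
      show v (s (s p2)) < v (s (s p1))
      rw [hs, sPerm_sq_apply hn, sPerm_sq_apply hn]
      exact h4
    exact nrm_mem hn0 hvs horder hinv
  have hinj : Set.InjOn F (InvSet n v) :=
    (F_injOn hn i).mono (by intro p hp; exact ⟨hp.1, hp.2.1⟩)
  -- the extra inversion
  set e : ℤ×ℤ := (i - nsh n i, i + 1 - nsh n i) with he
  have hedvd := nsh_dvd hn0 i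
  have heb := nsh_bounds hn0 i
  have hemem : e ∈ InvSet n (v * s) := by
    refine ⟨heb.1, heb.2, by show i - nsh n i < i + 1 - nsh n i; omega, ?_⟩
    show v (s (i + 1 - nsh n i)) < v (s (i - nsh n i))
    have hs1 : s (i - nsh n i) = i - nsh n i + 1 :=
      sPerm_apply_dvd (dvd_congr_arg (dvd_neg.mpr hedvd) (by ring))
    have hs2 : s (i + 1 - nsh n i) = i - nsh n i :=  by
      rw [sPerm_apply_dvd' hn (dvd_congr_arg (dvd_neg.mpr hedvd) (by ring))]; ring
    rw [hs1, hs2]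
    have e1 : v (i - nsh n i) = v i + (-(nsh n i)) := by
      have := per_shift hv (p := i - nsh n i) (q := i)
        (dvd_congr_arg (dvd_neg.mpr hedvd) (by ring))
      omega
    have e2 : v (i - nsh n i + 1) = v (i+1) + (-(nsh n i)) := by
      have := per_shift hv (p := i - nsh n i + 1) (q := i + 1)
        (dvd_congr_arg (dvd_neg.mpr hedvd) (by ring))
      omega
    omega
  have henotin : e ∉ F '' InvSet n v := by
    rintro ⟨⟨p1, p2⟩, ⟨h1, h2, h3, h4⟩, hFp⟩
    dsimp only at h1 h2 h3 h4
    simp only [hF, he, Prod.mk.injEq] at hFp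
    obtain ⟨f1, f2⟩ := hFp
    set d := nsh n (s p1) - nsh n i with hd
    have hdd : (n:ℤ) ∣ d := dvd_sub (nsh_dvd hn0 _) (nsh_dvd hn0 _)
    have hsp1 : s p1 = i + d := by omega
    have hsp2 : s p2 = i + 1 + d := by omega
    have hp1 : p1 = i + d + 1 := by
      have : s (s p1) = s (i + d) := by rw [hsp1]
      rw [hs, sPerm_sq_apply hn] at this
      rw [this, sPerm_apply_dvd (dvd_congr_arg hdd (by ring))]
    have hp2 : p2 = i + d := by
      have : s (s p2) = s (i + 1 + d) := by rw [hsp2]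
      rw [hs, sPerm_sq_apply hn] at this
      rw [this, sPerm_apply_dvd' hn (dvd_congr_arg hdd (by ring))]
      ring
    omega
  have hfin : (InvSet n (v * s)).Finite := invSet_finite hn0 hvs
  have hss : F '' InvSet n v ⊂ InvSet n (v * s) := by
    rw [Set.ssubset_iff_of_subset (by rintro x ⟨p, hp, rfl⟩; exact hmaps p hp)]
    exact ⟨e, hemem, henotin⟩
  calc affLen n v = (InvSet n v).ncard := affLen_eq_ncard v
    _ = (F '' InvSet n v).ncard := (Set.ncard_image_of_injOn hinj).symm
    _ < (InvSet n (v * s)).ncard := Set.ncard_lt_ncard hss hfin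
    _ = affLen n (v * s) := (affLen_eq_ncard _).symm


/-- Right multiplication by `sPerm n i` at a descent decreases length. -/
lemma affLen_mul_sPerm_lt (hn : 2 ≤ n) {v : Equiv.Perm ℤ}
    (hv : ∀ x : ℤ, v (x + n) = v x + n) {i : ℤ} (hvi : v (i+1) < v i) :
    affLen n (v * sPerm n i) < affLen n v := by
  have hvs : ∀ x : ℤ, (v * sPerm n i) (x + n) = (v * sPerm n i) x + n := by
    intro x
    show v (sPerm n i (x + n)) = v (sPerm n i x) + n
    rw [sPerm_per hn, hv]
  have h1 : (v * sPerm n i) i = v (i+1) := by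
    show v (sPerm n i i) = _
    rw [sPerm_self]
  have h2 : (v * sPerm n i) (i+1) = v i := by
    show v (sPerm n i (i+1)) = _
    rw [sPerm_self' hn]
  have := affLen_lt_mul_sPerm hn hvs (i := i) (by rw [h1, h2]; exact hvi)
  have he : v * sPerm n i * sPerm n i = v := by
    rw [mul_assoc, sPerm_sq hn, mul_one]
  rwa [he] at this

lemma affLen_mul_sPerm_le (hn : 2 ≤ n) {v : Equiv.Perm ℤ}
    (hv : ∀ x : ℤ, v (x + n) = v x + n) (i : ℤ) :
    affLen n (v * sPerm n i) ≤ affLen n v + 1 := by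
  classical
  have hn0 : 0 < n := by omega
  rcases lt_trichotomy (v i) (v (i+1)) with hlt | heq | hgt
  · -- ascent : count the inversions of v * s
    set s := sPerm n i with hs
    have hvs : ∀ x : ℤ, (v * s) (x + n) = (v * s) x + n := by
      intro x
      show v (s (x + n)) = v (s x) + n
      rw [hs, sPerm_per hn, hv]
    set F : ℤ×ℤ → ℤ×ℤ := fun p => (s p.1 - nsh n (s p.1), s p.2 - nsh n (s p.1)) with hF
    set e : ℤ×ℤ := (i - nsh n i, i + 1 - nsh n i) with he
    have hedvd := nsh_dvd hn0 i
    have heb := nsh_bounds hn0 i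
    have hmaps : ∀ p ∈ InvSet n (v * s) \ {e}, F p ∈ InvSet n v := by
      rintro ⟨p1, p2⟩ ⟨⟨h1, h2, h3, h4⟩, hne⟩
      dsimp only at h1 h2 h3 h4
      have horder : s p1 < s p2 := by
        rcases sPerm_order hn (j := i) h3 with h | ⟨hq, hd, _, _⟩
        · exact h
        · exfalso
          apply hne
          simp only [Set.mem_singleton_iff, he, Prod.mk.injEq]
          have hd2 : (n:ℤ) ∣ p1 - (i - nsh n i) :=
            dvd_congr_arg (dvd_add hd hedvd) (by ring)
          have : p1 = i - nsh n i := rep_unique hn0 h1 h2 heb.1 heb.2 hd2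
          exact ⟨this, by omega⟩
      have hinv : v (s p2) < v (s p1) := h4
      exact nrm_mem hn0 hv horder hinv
    have hinj : Set.InjOn F (InvSet n (v * s) \ {e}) :=
      (F_injOn hn i).mono (by rintro p ⟨hp, _⟩; exact ⟨hp.1, hp.2.1⟩)
    have hfinv : (InvSet n v).Finite := invSet_finite hn0 hv
    have hfinvs : (InvSet n (v * s)).Finite := invSet_finite hn0 hvs
    have step1 : (InvSet n (v * s)).ncard ≤ (InvSet n (v * s) \ {e}).ncard + 1 := by
      by_cases hmem : e ∈ InvSet n (v * s)
      · rw [Set.ncard_diff_singleton_add_one hmem hfinvs]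
      · rw [Set.diff_singleton_eq_self hmem]
        omega
    have step2 : (InvSet n (v * s) \ {e}).ncard ≤ (InvSet n v).ncard := by
      rw [← Set.ncard_image_of_injOn hinj]
      exact Set.ncard_le_ncard (by rintro x ⟨p, hp, rfl⟩; exact hmaps p hp) hfinv
    calc affLen n (v * s) = (InvSet n (v * s)).ncard := affLen_eq_ncard _
      _ ≤ (InvSet n v).ncard + 1 := by omega
      _ = affLen n v + 1 := by rw [affLen_eq_ncard]
  · exact absurd (v.injective heq) (by omega)
  · have := affLen_mul_sPerm_lt hn hv hgt
    omega

/-- Left multiplication by `sPerm n i` at an inverse-ascent increases length. -/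
lemma affLen_lt_sPerm_mul (hn : 2 ≤ n) {v : Equiv.Perm ℤ}
    (hv : ∀ x : ℤ, v (x + n) = v x + n) {i : ℤ} (hvi : v⁻¹ i < v⁻¹ (i+1)) :
    affLen n v < affLen n (sPerm n i * v) := by
  classical
  have hn0 : 0 < n := by omega
  set s := sPerm n i with hs
  have hsv : ∀ x : ℤ, (s * v) (x + n) = (s * v) x + n := by
    intro x
    show s (v (x + n)) = s (v x) + n
    rw [hv, hs, sPerm_per hn]
  have hsub : InvSet n v ⊆ InvSet n (s * v) := by
    rintro ⟨p1, p2⟩ ⟨h1, h2, h3, h4⟩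
    dsimp only at h1 h2 h3 h4
    refine ⟨h1, h2, h3, ?_⟩
    show s (v p2) < s (v p1)
    rcases sPerm_order hn (j := i) h4 with h | ⟨hq, hd, _, _⟩
    · exact h
    · exfalso
      have e2 : p2 = v⁻¹ i + (v p2 - i) := by
        have h5 := per_shift (per_inv hv) (p := v p2) (q := i) hd
        rw [Equiv.Perm.inv_apply_self] at h5
        omega
      have e1 : p1 = v⁻¹ (i+1) + (v p2 - i) := by
        have hd1 : (n:ℤ) ∣ v p1 - (i+1) := dvd_congr_arg hd (by omega)
        have h5 := per_shift (per_inv hv) (p := v p1) (q := i+1) hd1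
        rw [Equiv.Perm.inv_apply_self] at h5
        omega
      omega
  set c := v⁻¹ i with hc
  set d := v⁻¹ (i+1) with hd
  set e2 : ℤ×ℤ := (c - nsh n c, d - nsh n c) with he2
  have hshd := nsh_dvd hn0 c
  have hshb := nsh_bounds hn0 c
  have hvc : v (c - nsh n c) = i - nsh n c := by
    have h5 := per_shift hv (p := c - nsh n c) (q := c)
      (dvd_congr_arg (dvd_neg.mpr hshd) (by ring))
    have h6 : v c = i := by rw [hc, Equiv.Perm.apply_inv_self]
    omega
  have hvd : v (d - nsh n c) = i + 1 - nsh n c := by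
    have h5 := per_shift hv (p := d - nsh n c) (q := d)
      (dvd_congr_arg (dvd_neg.mpr hshd) (by ring))
    have h6 : v d = i + 1 := by rw [hd, Equiv.Perm.apply_inv_self]
    omega
  have he2mem : e2 ∈ InvSet n (s * v) := by
    refine ⟨hshb.1, hshb.2, by have hcd : c < d := hvi; show c - nsh n c < d - nsh n c; omega, ?_⟩
    show s (v (d - nsh n c)) < s (v (c - nsh n c))
    rw [hvc, hvd, hs]
    rw [sPerm_apply_dvd' hn (x := i + 1 - nsh n c) (dvd_congr_arg (dvd_neg.mpr hshd) (by ring)),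
      sPerm_apply_dvd (x := i - nsh n c) (dvd_congr_arg (dvd_neg.mpr hshd) (by ring))]
    omega
  have he2nmem : e2 ∉ InvSet n v := by
    rintro ⟨_, _, _, h4⟩
    change v (d - nsh n c) < v (c - nsh n c) at h4
    rw [hvc, hvd] at h4
    omega
  have hss : InvSet n v ⊂ InvSet n (s * v) := by
    rw [Set.ssubset_iff_of_subset hsub]
    exact ⟨e2, he2mem, he2nmem⟩
  calc affLen n v = (InvSet n v).ncard := affLen_eq_ncard _
    _ < (InvSet n (s * v)).ncard := Set.ncard_lt_ncard hss (invSet_finite hn0 hsv)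
    _ = affLen n (s * v) := (affLen_eq_ncard _).symm

/-- An everywhere-ascending affine permutation is the identity. -/
lemma eq_one_of_ascending (hn : 0 < n) {v : Equiv.Perm ℤ} (hv : IsAffine n v)
    (h : ∀ x : ℤ, v x < v (x+1)) : v = 1 := by
  have mono : StrictMono (v : ℤ → ℤ) := strictMono_int_of_lt_succ h
  have step : ∀ x : ℤ, v (x+1) = v x + 1 := by
    intro x
    by_contra hne
    have h2 : v x + 2 ≤ v (x+1) := by
      have := h x
      omega
    set t := v⁻¹ (v x + 1) with ht
    have hvt : v t = v x + 1 := by rw [ht, Equiv.Perm.apply_inv_self]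
    rcases le_or_gt t x with hle | hlt
    · have := mono.le_iff_le.mpr hle
      omega
    · have : x + 1 ≤ t := by omega
      have := mono.le_iff_le.mpr this
      omega
  have lin : ∀ x : ℤ, v x - x = v 0 := by
    intro x
    induction x using Int.induction_on with
    | zero => simp
    | succ k ih => rw [step k]; omega
    | pred k ih =>
        have := step (-(k:ℤ) - 1)
        rw [show -(k:ℤ) - 1 + 1 = -(k:ℤ) by ring] at this
        omega
  have hsum := hv.2
  have hconst : ∀ x ∈ Icc (1:ℤ) (n:ℤ), v x - x = v 0 := fun x _ => lin x
  rw [Finset.sum_congr rfl hconst, Finset.sum_const, Int.card_Icc] at hsum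
  have hcard : ((n:ℤ) + 1 - 1).toNat = n := by omega
  rw [hcard] at hsum
  have hv0 : v 0 = 0 := by
    have hnn : (n:ℤ) ≠ 0 := by positivity
    have : (n:ℤ) * v 0 = 0 := by
      rw [← nsmul_eq_mul]; exact hsum
    exact (mul_eq_zero.mp this).resolve_left hnn
  apply Equiv.ext
  intro x
  have := lin x
  rw [hv0] at this
  show v x = x
  omega

lemma exists_descent (hn : 0 < n) {v : Equiv.Perm ℤ} (hv : IsAffine n v) (hne : v ≠ 1) :
    ∃ k : ℤ, v (k+1) < v k := by
  by_contra hcon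
  push_neg at hcon
  apply hne
  apply eq_one_of_ascending hn hv
  intro x
  rcases (hcon x).lt_or_eq with h | h
  · exact h
  · exact absurd (v.injective h) (by omega)

lemma eq_one_of_affLen_zero (hn : 0 < n) {v : Equiv.Perm ℤ} (hv : IsAffine n v)
    (h0 : affLen n v = 0) : v = 1 := by
  by_contra hne
  obtain ⟨k, hk⟩ := exists_descent hn hv hne
  have hmem : (k - nsh n k, k + 1 - nsh n k) ∈ InvSet n v :=
    nrm_mem hn hv.1 (by omega) hk
  have hfin := invSet_finite hn hv.1
  have hpos : 0 < (InvSet n v).ncard := (Set.ncard_pos hfin).mpr ⟨_, hmem⟩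
  rw [affLen_eq_ncard] at h0
  omega

lemma affLen_pos (hn : 0 < n) {v : Equiv.Perm ℤ} (hv : IsAffine n v) (hne : v ≠ 1) :
    0 < affLen n v := by
  rcases Nat.eq_zero_or_pos (affLen n v) with h | h
  · exact absurd (eq_one_of_affLen_zero hn hv h) hne
  · exact h


lemma isAffine_sPerm (hn : 2 ≤ n) (i : ℤ) : IsAffine n (sPerm n i) := by
  have hn0 : 0 < n := by omega
  constructor
  · exact sPerm_per hn i
  · set i₀ := i - nsh n i with hi0
    set i₁ := (i+1) - nsh n (i+1) with hi1
    have hb0 := nsh_bounds hn0 i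
    have hb1 := nsh_bounds hn0 (i+1)
    have hd0 := nsh_dvd hn0 i
    have hd1 := nsh_dvd hn0 (i+1)
    have hdI0 : (n:ℤ) ∣ i - i₀ := by
      rw [hi0]; simpa using hd0
    have hdI1 : (n:ℤ) ∣ (i+1) - i₁ := by
      rw [hi1]; simpa using hd1
    have hne : i₀ ≠ i₁ := by
      intro hc
      apply ndvd_one hn
      have h5 : (n:ℤ) ∣ (i+1) - i₀ := by rw [hc]; exact hdI1
      exact dvd_congr_arg (dvd_sub h5 hdI0) (by ring)
    have key : ∀ x ∈ Icc (1:ℤ) (n:ℤ), sPerm n i x - x =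
        (if x = i₀ then 1 else 0) + (if x = i₁ then (-1) else 0) := by
      intro x hx
      rw [mem_Icc] at hx
      rcases sPerm_cases hn i x with ⟨h, e⟩ | ⟨h, e⟩ | ⟨h1, h2, e⟩
      · have hx0 : x = i₀ := by
          apply rep_unique hn0 hx.1 hx.2 (by omega) (by omega)
          exact dvd_congr_arg (dvd_sub h (dvd_sub_rev hdI0)) (by ring)
        have hx1 : x ≠ i₁ := by
          intro hc
          apply ndvd_one hn
          have hxd : (n:ℤ) ∣ x - (i+1) := by rw [hc]; exact dvd_sub_rev hdI1
          exact dvd_congr_arg (dvd_sub h hxd) (by ring)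
        rw [if_pos hx0, if_neg hx1, e]; ring
      · have hx1 : x = i₁ := by
          apply rep_unique hn0 hx.1 hx.2 (by omega) (by omega)
          exact dvd_congr_arg (dvd_sub h (dvd_sub_rev hdI1)) (by ring)
        have hx0 : x ≠ i₀ := by
          intro hc
          apply ndvd_one hn
          have hxd : (n:ℤ) ∣ x - i := by rw [hc]; exact dvd_sub_rev hdI0
          exact dvd_congr_arg (dvd_sub hxd h) (by ring)
        rw [if_pos hx1, if_neg hx0, e]; ring
      · have hx0 : x ≠ i₀ := by
          intro hc
          apply h1
          rw [hc]; exact dvd_sub_rev hdI0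
        have hx1 : x ≠ i₁ := by
          intro hc
          apply h2
          rw [hc]; exact dvd_sub_rev hdI1
        rw [if_neg hx0, if_neg hx1, e]; ring
    rw [Finset.sum_congr rfl key, Finset.sum_add_distrib,
      Finset.sum_ite_eq' _ i₀ (fun _ => (1:ℤ)), Finset.sum_ite_eq' _ i₁ (fun _ => (-1:ℤ))]
    have hm0 : i₀ ∈ Icc (1:ℤ) (n:ℤ) := by rw [mem_Icc]; constructor <;> omega
    have hm1 : i₁ ∈ Icc (1:ℤ) (n:ℤ) := by rw [mem_Icc]; constructor <;> omega
    rw [if_pos hm0, if_pos hm1]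
    ring

section Demazure

variable {D : Equiv.Perm ℤ → Equiv.Perm ℤ → Equiv.Perm ℤ}

lemma Dmul_desc (hD : IsDemazure n D) (hn : 2 ≤ n) {v : Equiv.Perm ℤ} (hv : IsAffine n v)
    {i : ℤ} (hd : v (i+1) < v i) : D v (sPerm n i) = v :=
  (hD.2.2.2 v hv i).1 (affLen_mul_sPerm_lt hn hv.1 hd)

lemma Dmul_asc (hD : IsDemazure n D) (hn : 2 ≤ n) {v : Equiv.Perm ℤ} (hv : IsAffine n v)
    {i : ℤ} (hd : v i < v (i+1)) : D v (sPerm n i) = v * sPerm n i :=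
  (hD.2.2.2 v hv i).2 (affLen_lt_mul_sPerm hn hv.1 hd)

/-- Left multiplication rule for the Demazure product. -/
lemma Dleft_aux (hD : IsDemazure n D) (hn : 2 ≤ n) : ∀ N : ℕ, ∀ u : Equiv.Perm ℤ,
    IsAffine n u → affLen n u ≤ N → ∀ i : ℤ,
    D (sPerm n i) u = if u⁻¹ (i+1) < u⁻¹ i then u else sPerm n i * u := by
  have hn0 : 0 < n := by omega
  have base : ∀ i : ℤ, D (sPerm n i) 1 =
      if (1 : Equiv.Perm ℤ)⁻¹ (i+1) < (1 : Equiv.Perm ℤ)⁻¹ i then 1 else sPerm n i * 1 := by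
    intro i
    rw [if_neg (by simp), mul_one]
    exact (hD.2.2.1 (sPerm n i) (isAffine_sPerm hn i)).1
  intro N
  induction N with
  | zero =>
      intro u hu h0 i
      have h1 : u = 1 := eq_one_of_affLen_zero hn0 hu (Nat.le_zero.mp h0)
      subst h1
      exact base i
  | succ N ih =>
      intro u hu hlen i
      by_cases hone : u = 1
      · subst hone; exact base i
      · obtain ⟨j, hj⟩ := exists_descent hn0 hu hone
        set u' := u * sPerm n j with hu'0
        have ht : IsAffine n (sPerm n j) := isAffine_sPerm hn j
        have hu'aff : IsAffine n u' := isAffine_mul hn0 hu ht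
        have hu't : u' * sPerm n j = u := by rw [hu'0, mul_assoc, sPerm_sq hn, mul_one]
        have hu'j : u' j = u (j+1) := by
          show u (sPerm n j j) = _
          rw [sPerm_self]
        have hu'j1 : u' (j+1) = u j := by
          show u (sPerm n j (j+1)) = _
          rw [sPerm_self' hn]
        have hlt : affLen n u' < affLen n u := affLen_mul_sPerm_lt hn hu.1 hj
        have hlen' : affLen n u' ≤ N := by omega
        have hDu't : D u' (sPerm n j) = u := by
          rw [Dmul_asc hD hn hu'aff (i := j) (by omega), hu't]
        have hassoc : D (sPerm n i) u = D (D (sPerm n i) u') (sPerm n j) := by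
          calc D (sPerm n i) u = D (sPerm n i) (D u' (sPerm n j)) := by rw [hDu't]
            _ = D (D (sPerm n i) u') (sPerm n j) :=
              (hD.1 _ _ _ (isAffine_sPerm hn i) hu'aff ht).symm
        have hIH := ih u' hu'aff hlen' i
        have hinvu : ∀ x : ℤ, u⁻¹ x = sPerm n j (u'⁻¹ x) := by
          intro x
          rw [← hu't, mul_inv_rev, sPerm_inv hn]
          rfl
        rcases lt_trichotomy (u'⁻¹ (i+1)) (u'⁻¹ i) with hA | hE | hB
        · -- Case A: descent passes to u
          rw [if_pos hA] at hIH
          have goal_cond : u⁻¹ (i+1) < u⁻¹ i := by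
            rcases sPerm_order hn (j := j) hA with h | ⟨hq, hd, _, _⟩
            · rw [hinvu, hinvu]; exact h
            · exfalso
              have hd' : (n:ℤ) ∣ (j+1) - (u'⁻¹ (i+1) + 1) := by
                have h5 := dvd_sub_rev hd
                exact dvd_congr_arg h5 (by ring)
              have e1 := per_shift hu'aff.1 (dvd_sub_rev hd)
              have e2 := per_shift hu'aff.1 hd'
              rw [Equiv.Perm.apply_inv_self] at e1
              have e3 : u' (u'⁻¹ (i+1) + 1) = i := by
                rw [← hq, Equiv.Perm.apply_inv_self]
              rw [e3] at e2
              omega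
          rw [if_pos goal_cond, hassoc, hIH, hDu't]
        · exact absurd (Equiv.injective u'⁻¹ hE) (by omega)
        · -- Case B
          rw [if_neg (by omega)] at hIH
          have hord := sPerm_order hn (j := i) (p := u' j) (q := u' (j+1)) (by omega)
          rcases hord with hB1 | ⟨hq2, hd2, _, _⟩
          · -- B1 : s*u' still ascends at j
            have hsu'aff : IsAffine n (sPerm n i * u') :=
              isAffine_mul hn0 (isAffine_sPerm hn i) hu'aff
            have hval : (sPerm n i * u') j < (sPerm n i * u') (j+1) := hB1
            have hD2 : D (sPerm n i * u') (sPerm n j) = sPerm n i * u' * sPerm n j :=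
              Dmul_asc hD hn hsu'aff (i := j) hval
            have goal_cond : ¬ (u⁻¹ (i+1) < u⁻¹ i) := by
              intro hc
              rw [hinvu, hinvu] at hc
              rcases sPerm_order hn (j := j) hB with h | ⟨hq, hd, _, _⟩
              · omega
              · -- flip case: contradicts B1
                have hd' : (n:ℤ) ∣ (j+1) - (u'⁻¹ i + 1) := by
                  have h5 := dvd_sub_rev hd
                  exact dvd_congr_arg h5 (by ring)
                have e1 := per_shift hu'aff.1 (dvd_sub_rev hd)
                have e2 := per_shift hu'aff.1 hd'
                rw [Equiv.Perm.apply_inv_self] at e1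
                have e3 : u' (u'⁻¹ i + 1) = i + 1 := by
                  rw [← hq, Equiv.Perm.apply_inv_self]
                rw [e3] at e2
                have hdj : (n:ℤ) ∣ u' j - i := by
                  have h5 := dvd_sub_rev hd
                  exact dvd_congr_arg h5 (by omega)
                have hs1 : sPerm n i (u' j) = u' j + 1 := sPerm_apply_dvd hdj
                have hs2 : sPerm n i (u' (j+1)) = u' (j+1) - 1 := by
                  apply sPerm_apply_dvd' hn
                  exact dvd_congr_arg hdj (by omega)
                omega
            rw [if_neg goal_cond, hassoc, hIH, hD2, mul_assoc, hu't]
          · -- B2 : sPerm n i * u' = u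
            have hcomm : sPerm n i * u' = u := by
              apply Equiv.ext
              intro x
              show sPerm n i (u' x) = u x
              have hux : u x = u' (sPerm n j x) := by rw [← hu't]; rfl
              by_cases c1 : (n:ℤ) ∣ x - j
              · have e1 := per_shift hu'aff.1 c1
                have hdvd : (n:ℤ) ∣ u' x - i :=
                  dvd_congr_arg (dvd_add hd2 c1) (by omega)
                have c1' : (n:ℤ) ∣ (x+1) - (j+1) := dvd_congr_arg c1 (by ring)
                have e2 := per_shift hu'aff.1 c1'
                rw [sPerm_apply_dvd hdvd, hux, sPerm_apply_dvd c1, e2, e1]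
                omega
              · by_cases c2 : (n:ℤ) ∣ x - (j+1)
                · have e1 := per_shift hu'aff.1 c2
                  have hdvd : (n:ℤ) ∣ u' x - (i+1) :=
                    dvd_congr_arg (dvd_add hd2 c2) (by omega)
                  have c2' : (n:ℤ) ∣ (x-1) - j := dvd_congr_arg c2 (by ring)
                  have e2 := per_shift hu'aff.1 c2'
                  rw [sPerm_apply_dvd' hn hdvd, hux, sPerm_apply_dvd' hn c2, e2, e1]
                  omega
                · have hni : ¬ (n:ℤ) ∣ u' x - i := by
                    intro hc
                    apply c1
                    have h5 : (n:ℤ) ∣ u' x - u' j := dvd_congr_arg (dvd_sub hc hd2) (by ring)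
                    have h6 := per_shift (per_inv hu'aff.1) h5
                    rw [Equiv.Perm.inv_apply_self, Equiv.Perm.inv_apply_self] at h6
                    exact dvd_congr_arg h5 (by omega)
                  have hni1 : ¬ (n:ℤ) ∣ u' x - (i+1) := by
                    intro hc
                    apply c2
                    have hdj1 : (n:ℤ) ∣ u' (j+1) - (i+1) := dvd_congr_arg hd2 (by omega)
                    have h5 : (n:ℤ) ∣ u' x - u' (j+1) :=
                      dvd_congr_arg (dvd_sub hc hdj1) (by ring)
                    have h6 := per_shift (per_inv hu'aff.1) h5
                    rw [Equiv.Perm.inv_apply_self, Equiv.Perm.inv_apply_self] at h6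
                    exact dvd_congr_arg h5 (by omega)
                  rw [sPerm_apply_ndvd hni hni1, hux, sPerm_apply_ndvd c1 c2]
            have hDut : D u (sPerm n j) = u := Dmul_desc hD hn hu (i := j) hj
            have goal_cond : u⁻¹ (i+1) < u⁻¹ i := by
              have h1 : u⁻¹ (i+1) = u'⁻¹ i := by
                rw [← hcomm, mul_inv_rev, sPerm_inv hn]
                show u'⁻¹ (sPerm n i (i+1)) = u'⁻¹ i
                rw [sPerm_self' hn]
              have h2 : u⁻¹ i = u'⁻¹ (i+1) := by
                rw [← hcomm, mul_inv_rev, sPerm_inv hn]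
                show u'⁻¹ (sPerm n i i) = u'⁻¹ (i+1)
                rw [sPerm_self]
              omega
            rw [if_pos goal_cond, hassoc, hIH, hcomm, hDut]

lemma Dleft (hD : IsDemazure n D) (hn : 2 ≤ n) {u : Equiv.Perm ℤ} (hu : IsAffine n u)
    (i : ℤ) :
    D (sPerm n i) u = if u⁻¹ (i+1) < u⁻¹ i then u else sPerm n i * u :=
  Dleft_aux hD hn (affLen n u) u hu (le_refl _) i

/-- The Demazure product is an anti-homomorphism with respect to inverses. -/
lemma Dinv_aux (hD : IsDemazure n D) (hn : 2 ≤ n) : ∀ N : ℕ, ∀ h g : Equiv.Perm ℤ,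
    IsAffine n h → IsAffine n g → affLen n h ≤ N → (D g h)⁻¹ = D h⁻¹ g⁻¹ := by
  have hn0 : 0 < n := by omega
  have base : ∀ g : Equiv.Perm ℤ, IsAffine n g → (D g 1)⁻¹ = D (1 : Equiv.Perm ℤ)⁻¹ g⁻¹ := by
    intro g hg
    rw [(hD.2.2.1 g hg).1, inv_one, (hD.2.2.1 g⁻¹ (isAffine_inv hn0 hg)).2]
  intro N
  induction N with
  | zero =>
      intro h g hh hg h0
      have h1 : h = 1 := eq_one_of_affLen_zero hn0 hh (Nat.le_zero.mp h0)
      subst h1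
      exact base g hg
  | succ N ih =>
      intro h g hh hg hlen
      by_cases hone : h = 1
      · subst hone; exact base g hg
      · obtain ⟨j, hj⟩ := exists_descent hn0 hh hone
        set h' := h * sPerm n j with hh'0
        have ht : IsAffine n (sPerm n j) := isAffine_sPerm hn j
        have hh'aff : IsAffine n h' := isAffine_mul hn0 hh ht
        have hh't : h' * sPerm n j = h := by rw [hh'0, mul_assoc, sPerm_sq hn, mul_one]
        have hh'j : h' j = h (j+1) := by
          show h (sPerm n j j) = _
          rw [sPerm_self]
        have hh'j1 : h' (j+1) = h j := by
          show h (sPerm n j (j+1)) = _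
          rw [sPerm_self' hn]
        have hlt : affLen n h' < affLen n h := affLen_mul_sPerm_lt hn hh.1 hj
        have hlen' : affLen n h' ≤ N := by omega
        have hDh't : D h' (sPerm n j) = h := by
          rw [Dmul_asc hD hn hh'aff (i := j) (by omega), hh't]
        set K := D g h' with hK0
        have hKaff : IsAffine n K := hD.2.1 g h' hg hh'aff
        have hKIH : K⁻¹ = D h'⁻¹ g⁻¹ := ih h' g hh'aff hg hlen'
        have hKinv : IsAffine n K⁻¹ := isAffine_inv hn0 hKaff
        have hassoc : D g h = D K (sPerm n j) := by
          calc D g h = D g (D h' (sPerm n j)) := by rw [hDh't]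
            _ = D K (sPerm n j) := (hD.1 _ _ _ hg hh'aff ht).symm
        have hinvh : h⁻¹ = sPerm n j * h'⁻¹ := by
          rw [← hh't, mul_inv_rev, sPerm_inv hn]
        have hDth' : D (sPerm n j) h'⁻¹ = sPerm n j * h'⁻¹ := by
          rw [Dleft hD hn (isAffine_inv hn0 hh'aff) j]
          rw [if_neg]
          rw [inv_inv]
          omega
        have hRHS : D h⁻¹ g⁻¹ = D (sPerm n j) K⁻¹ := by
          calc D h⁻¹ g⁻¹ = D (sPerm n j * h'⁻¹) g⁻¹ := by rw [hinvh]
            _ = D (D (sPerm n j) h'⁻¹) g⁻¹ := by rw [hDth']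
            _ = D (sPerm n j) (D h'⁻¹ g⁻¹) :=
                hD.1 _ _ _ ht (isAffine_inv hn0 hh'aff) (isAffine_inv hn0 hg)
            _ = D (sPerm n j) K⁻¹ := by rw [hKIH]
        have hDtK : D (sPerm n j) K⁻¹ = if K (j+1) < K j then K⁻¹ else sPerm n j * K⁻¹ := by
          rw [Dleft hD hn hKinv j, inv_inv]
        rcases lt_trichotomy (K (j+1)) (K j) with hKd | hKe | hKa
        · -- descent of K at j
          have hDKt : D K (sPerm n j) = K := Dmul_desc hD hn hKaff hKd
          rw [hassoc, hDKt, hRHS, hDtK, if_pos hKd]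
        · exact absurd (Equiv.injective K hKe) (by omega)
        · -- ascent of K at j
          have hDKt : D K (sPerm n j) = K * sPerm n j := Dmul_asc hD hn hKaff hKa
          rw [hassoc, hDKt, hRHS, hDtK, if_neg (by omega), mul_inv_rev, sPerm_inv hn]

lemma Dinv (hD : IsDemazure n D) (hn : 2 ≤ n) {g h : Equiv.Perm ℤ}
    (hg : IsAffine n g) (hh : IsAffine n h) : (D g h)⁻¹ = D h⁻¹ g⁻¹ :=
  Dinv_aux hD hn (affLen n h) h g hh hg (le_refl _)

/-- The conjugation identity: `(w∘s)⁻¹ ∘ z ∘ (w∘s) = s ∘ (w⁻¹ ∘ z ∘ w) ∘ s`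
for an involution `z`. -/
lemma G3_aux (hD : IsDemazure n D) (hn : 2 ≤ n) : ∀ N : ℕ, ∀ w z : Equiv.Perm ℤ,
    IsAffine n w → IsAffine n z → z⁻¹ = z → affLen n w ≤ N → ∀ i : ℤ,
    D (D w (sPerm n i))⁻¹ (D z (D w (sPerm n i))) =
      D (sPerm n i) (D (D w⁻¹ (D z w)) (sPerm n i)) := by
  have hn0 : 0 < n := by omega
  have base : ∀ z : Equiv.Perm ℤ, IsAffine n z → ∀ i : ℤ,
      D (D 1 (sPerm n i))⁻¹ (D z (D 1 (sPerm n i))) =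
        D (sPerm n i) (D (D (1 : Equiv.Perm ℤ)⁻¹ (D z 1)) (sPerm n i)) := by
    intro z hz i
    have hs : IsAffine n (sPerm n i) := isAffine_sPerm hn i
    rw [(hD.2.2.1 (sPerm n i) hs).2, sPerm_inv hn, inv_one, (hD.2.2.1 z hz).1,
      (hD.2.2.1 z hz).2]
  intro N
  induction N with
  | zero =>
      intro w z hw hz hzi h0 i
      have h1 : w = 1 := eq_one_of_affLen_zero hn0 hw (Nat.le_zero.mp h0)
      subst h1
      exact base z hz i
  | succ N ih =>
      intro w z hw hz hzi hlen i
      by_cases hone : w = 1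
      · subst hone; exact base z hz i
      · have hwinv : IsAffine n w⁻¹ := isAffine_inv hn0 hw
        have hwine : w⁻¹ ≠ 1 := fun hc => hone (by rw [← inv_inv w, hc, inv_one])
        obtain ⟨k, hk⟩ := exists_descent hn0 hwinv hwine
        have hr : IsAffine n (sPerm n k) := isAffine_sPerm hn k
        have hs : IsAffine n (sPerm n i) := isAffine_sPerm hn i
        set w₁ := sPerm n k * w with hw10
        have hw1aff : IsAffine n w₁ := isAffine_mul hn0 hr hw
        have hrw1 : sPerm n k * w₁ = w := by
          rw [hw10, ← mul_assoc, sPerm_sq hn, one_mul]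
        have hw1inv : ∀ x : ℤ, w₁⁻¹ x = w⁻¹ (sPerm n k x) := by
          intro x
          rw [hw10, mul_inv_rev, sPerm_inv hn]
          rfl
        have hw1k : w₁⁻¹ k = w⁻¹ (k+1) := by rw [hw1inv, sPerm_self]
        have hw1k1 : w₁⁻¹ (k+1) = w⁻¹ k := by rw [hw1inv, sPerm_self' hn]
        have hlt : affLen n w₁ < affLen n w := by
          have h5 := affLen_lt_sPerm_mul hn hw1aff.1 (i := k) (by omega)
          rwa [hrw1] at h5
        have hlen1 : affLen n w₁ ≤ N := by omega
        have hDrw1 : D (sPerm n k) w₁ = w := by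
          rw [Dleft hD hn hw1aff k, if_neg (by omega), hrw1]
        -- involution z₁ = r ∘ z ∘ r
        set z₁ := D (sPerm n k) (D z (sPerm n k)) with hz10
        have hzr : IsAffine n (D z (sPerm n k)) := hD.2.1 z (sPerm n k) hz hr
        have hz1aff : IsAffine n z₁ := hD.2.1 _ _ hr hzr
        have hz1alt : z₁ = D (D (sPerm n k) z) (sPerm n k) := (hD.1 _ _ _ hr hz hr).symm
        have hz1inv : z₁⁻¹ = z₁ := by
          rw [hz1alt, Dinv hD hn (hD.2.1 _ _ hr hz) hr, sPerm_inv hn,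
            Dinv hD hn hr hz, hzi, sPerm_inv hn]
          exact hz10.symm.trans hz1alt
        -- A := D w₁ s
        set A := D w₁ (sPerm n i) with hA0
        have hAaff : IsAffine n A := hD.2.1 _ _ hw1aff hs
        have hAinv : IsAffine n A⁻¹ := isAffine_inv hn0 hAaff
        have claim1 : D w (sPerm n i) = D (sPerm n k) A := by
          calc D w (sPerm n i) = D (D (sPerm n k) w₁) (sPerm n i) := by rw [hDrw1]
            _ = D (sPerm n k) A := hD.1 _ _ _ hr hw1aff hs
        have claim2 : (D w (sPerm n i))⁻¹ = D A⁻¹ (sPerm n k) := by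
          rw [claim1, Dinv hD hn hr hAaff, sPerm_inv hn]
        have claim3 : D z (D w (sPerm n i)) = D (D z (sPerm n k)) A := by
          rw [claim1]
          exact (hD.1 _ _ _ hz hr hAaff).symm
        have hLHS : D (D w (sPerm n i))⁻¹ (D z (D w (sPerm n i))) = D A⁻¹ (D z₁ A) := by
          rw [claim2, claim3]
          calc D (D A⁻¹ (sPerm n k)) (D (D z (sPerm n k)) A)
              = D A⁻¹ (D (sPerm n k) (D (D z (sPerm n k)) A)) :=
                hD.1 _ _ _ hAinv hr (hD.2.1 _ _ hzr hAaff)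
            _ = D A⁻¹ (D (D (sPerm n k) (D z (sPerm n k))) A) := by
                rw [hD.1 _ _ _ hr hzr hAaff]
            _ = D A⁻¹ (D z₁ A) := by rw [← hz10]
        have hIH := ih w₁ z₁ hw1aff hz1aff hz1inv hlen1 i
        rw [← hA0] at hIH
        -- inner terms agree
        have hCeq : D w₁⁻¹ (D z₁ w₁) = D w⁻¹ (D z w) := by
          have hw1invaff : IsAffine n w₁⁻¹ := isAffine_inv hn0 hw1aff
          have e1 : w⁻¹ = D w₁⁻¹ (sPerm n k) := by
            rw [← hDrw1, Dinv hD hn hr hw1aff, sPerm_inv hn]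
          have e2 : D z w = D (D z (sPerm n k)) w₁ := by
            rw [← hDrw1]
            exact (hD.1 _ _ _ hz hr hw1aff).symm
          rw [e1, e2]
          symm
          calc D (D w₁⁻¹ (sPerm n k)) (D (D z (sPerm n k)) w₁)
              = D w₁⁻¹ (D (sPerm n k) (D (D z (sPerm n k)) w₁)) :=
                hD.1 _ _ _ hw1invaff hr (hD.2.1 _ _ hzr hw1aff)
            _ = D w₁⁻¹ (D (D (sPerm n k) (D z (sPerm n k))) w₁) := by
                rw [hD.1 _ _ _ hr hzr hw1aff]
            _ = D w₁⁻¹ (D z₁ w₁) := by rw [← hz10]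
        rw [hLHS, hIH, hCeq]

lemma affLen_one : affLen n (1 : Equiv.Perm ℤ) = 0 := by
  rw [affLen_eq_ncard]
  have : InvSet n (1 : Equiv.Perm ℤ) = ∅ := by
    ext p
    simp only [InvSet, Set.mem_setOf_eq, Set.mem_empty_iff_false, iff_false]
    rintro ⟨_, _, h3, h4⟩
    simp only [Equiv.Perm.one_apply] at h4
    omega
  rw [this, Set.ncard_empty]

/-- Main induction: if `w` is an atom of `y` and `w⁻¹` has a descent at `i`,
then `y` swaps `w⁻¹ (i+1)` and `w⁻¹ i`. -/
lemma main_aux (hD : IsDemazure n D) (hn : 2 ≤ n) : ∀ N : ℕ, ∀ w y : Equiv.Perm ℤ,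
    IsAtomOf n D y w → affLen n w ≤ N → ∀ i : ℤ, w⁻¹ (i+1) < w⁻¹ i →
    y (w⁻¹ (i+1)) = w⁻¹ i := by
  have hn0 : 0 < n := by omega
  intro N
  induction N with
  | zero =>
      intro w y hw h0 i hdesc
      exfalso
      have h1 : w = 1 := eq_one_of_affLen_zero hn0 hw.1 (Nat.le_zero.mp h0)
      rw [h1] at hdesc
      simp at hdesc
  | succ N ih =>
      intro w y hw hlen i hdesc
      obtain ⟨hwaff, hwsq, hwmin⟩ := hw
      set a := w⁻¹ (i+1) with ha0
      set b := w⁻¹ i with hb0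
      have hab : a < b := hdesc
      have hne1 : w ≠ 1 := by
        intro hc
        rw [ha0, hb0, hc] at hab
        simp at hab
      by_cases hcase : ∃ k : ℤ, w (k+1) < w k ∧ (b ≠ a + 1 ∨ ¬ (n:ℤ) ∣ a - k)
      · -- CASE 1: a non-flip descent exists
        obtain ⟨k, hk, hkn⟩ := hcase
        have hr : IsAffine n (sPerm n k) := isAffine_sPerm hn k
        set w₂ := w * sPerm n k with hw20
        have hw2aff : IsAffine n w₂ := isAffine_mul hn0 hwaff hr
        have hw2t : w₂ * sPerm n k = w := by rw [hw20, mul_assoc, sPerm_sq hn, mul_one]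
        have hw2k : w₂ k = w (k+1) := by
          show w (sPerm n k k) = _
          rw [sPerm_self]
        have hw2k1 : w₂ (k+1) = w k := by
          show w (sPerm n k (k+1)) = _
          rw [sPerm_self' hn]
        have hlt : affLen n w₂ < affLen n w := affLen_mul_sPerm_lt hn hwaff.1 hk
        have hlen2 : affLen n w₂ ≤ N := by omega
        set z₂ := D w₂⁻¹ w₂ with hz20
        have hw2invaff : IsAffine n w₂⁻¹ := isAffine_inv hn0 hw2aff
        have hz2aff : IsAffine n z₂ := hD.2.1 _ _ hw2invaff hw2aff
        have hz2inv : z₂⁻¹ = z₂ := by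
          rw [hz20, Dinv hD hn hw2invaff hw2aff, inv_inv]
        have hDw2t : D w₂ (sPerm n k) = w := by
          rw [Dmul_asc hD hn hw2aff (i := k) (by omega), hw2t]
        have hG3 := G3_aux hD hn (affLen n w₂) w₂ 1 hw2aff isAffine_one inv_one
          (le_refl _) k
        rw [hDw2t, (hD.2.2.1 w hwaff).2, hwsq, (hD.2.2.1 w₂ hw2aff).2, ← hz20] at hG3
        -- hG3 : y = D (sPerm n k) (D z₂ (sPerm n k))
        -- minimality transfers to w₂
        have hw2atom : IsAtomOf n D z₂ w₂ := by
          refine ⟨hw2aff, hz20.symm, ?_⟩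
          intro v hv hvsq
          by_contra hcon
          push_neg at hcon
          have hv'aff : IsAffine n (D v (sPerm n k)) := hD.2.1 v (sPerm n k) hv hr
          have hG3v := G3_aux hD hn (affLen n v) v 1 hv isAffine_one inv_one
            (le_refl _) k
          rw [(hD.2.2.1 (D v (sPerm n k)) hv'aff).2, (hD.2.2.1 v hv).2, hvsq, ← hG3] at hG3v
          have hv'len : affLen n (D v (sPerm n k)) ≤ affLen n v + 1 := by
            rcases lt_trichotomy (v k) (v (k+1)) with h | h | h
            · rw [Dmul_asc hD hn hv h]
              exact affLen_mul_sPerm_le hn hv.1 k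
            · exact absurd (v.injective h) (by omega)
            · rw [Dmul_desc hD hn hv h]
              omega
          have := hwmin (D v (sPerm n k)) hv'aff hG3v
          omega
        -- no flip
        have hnoflip : sPerm n k a < sPerm n k b := by
          rcases sPerm_order hn (j := k) hab with h | ⟨hq, hd, _, _⟩
          · exact h
          · exfalso
            rcases hkn with h1 | h1
            · exact h1 hq
            · exact h1 hd
        have hw2inv : ∀ x : ℤ, w₂⁻¹ x = sPerm n k (w⁻¹ x) := by
          intro x
          rw [hw20, mul_inv_rev, sPerm_inv hn]
          rfl
        have hdesc2 : w₂⁻¹ (i+1) < w₂⁻¹ i := by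
          rw [hw2inv, hw2inv]
          exact hnoflip
        have hIH := ih w₂ z₂ hw2atom hlen2 i hdesc2
        rw [hw2inv, hw2inv] at hIH
        -- hIH : z₂ (sPerm n k a) = sPerm n k b
        have hz2pt : ∀ x : ℤ, z₂ (z₂ x) = x := by
          intro x
          have h5 : z₂⁻¹ (z₂ x) = x := Equiv.Perm.inv_apply_self z₂ x
          rw [hz2inv] at h5
          exact h5
        rcases lt_trichotomy (z₂ (k+1)) (z₂ k) with hzd | hze | hza
        · -- (i) : y = z₂, contradicting minimality
          exfalso
          have hDz2t : D z₂ (sPerm n k) = z₂ := Dmul_desc hD hn hz2aff hzd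
          have hsz2 : D (sPerm n k) z₂ = z₂ := by
            rw [Dleft hD hn hz2aff k, hz2inv, if_pos hzd]
          have hyz2 : y = z₂ := by rw [hG3, hDz2t, hsz2]
          have := hwmin w₂ hw2aff (hz20.symm.trans hyz2.symm)
          omega
        · exact absurd (Equiv.injective z₂ hze) (by omega)
        · by_cases hfix : z₂ k = k ∧ z₂ (k+1) = k+1
          · -- (ii) : y = z₂ * sPerm n k
            have hDz2t : D z₂ (sPerm n k) = z₂ * sPerm n k := Dmul_asc hD hn hz2aff hza
            have hc1 : (z₂ * sPerm n k)⁻¹ (k+1) = sPerm n k (z₂ (k+1)) := by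
              rw [mul_inv_rev, sPerm_inv hn, hz2inv]
              rfl
            have hc2 : (z₂ * sPerm n k)⁻¹ k = sPerm n k (z₂ k) := by
              rw [mul_inv_rev, sPerm_inv hn, hz2inv]
              rfl
            have hyz2 : y = z₂ * sPerm n k := by
              rw [hG3, hDz2t, Dleft hD hn (isAffine_mul hn0 hz2aff hr) k,
                if_pos (by
                  rw [hc1, hc2, hfix.1, hfix.2, sPerm_self' hn, sPerm_self]
                  omega)]
            have hz2fixk : ∀ x : ℤ, (n:ℤ) ∣ x - k → z₂ x = x := by
              intro x hx
              have h5 := per_shift hz2aff.1 hx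
              rw [hfix.1] at h5
              omega
            have hz2fixk1 : ∀ x : ℤ, (n:ℤ) ∣ x - (k+1) → z₂ x = x := by
              intro x hx
              have h5 := per_shift hz2aff.1 hx
              rw [hfix.2] at h5
              omega
            have hzb : z₂ (sPerm n k b) = sPerm n k a := by
              rw [← hIH, hz2pt]
            have htb : sPerm n k b = b := by
              have h1 : ¬ (n:ℤ) ∣ b - k := by
                intro hc
                have hsb : sPerm n k b = b + 1 := sPerm_apply_dvd hc
                have h5 : z₂ (sPerm n k b) = sPerm n k b := by
                  apply hz2fixk1
                  rw [hsb]
                  exact dvd_congr_arg hc (by ring)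
                rw [hzb] at h5
                have := (sPerm n k).injective h5.symm
                omega
              have h2 : ¬ (n:ℤ) ∣ b - (k+1) := by
                intro hc
                have hsb : sPerm n k b = b - 1 := sPerm_apply_dvd' hn hc
                have h5 : z₂ (sPerm n k b) = sPerm n k b := by
                  apply hz2fixk
                  rw [hsb]
                  exact dvd_congr_arg hc (by ring)
                rw [hzb] at h5
                have := (sPerm n k).injective h5.symm
                omega
              exact sPerm_apply_ndvd h1 h2
            calc y a = z₂ (sPerm n k a) := by rw [hyz2]; rfl
              _ = sPerm n k b := hIH
              _ = b := htb
          · -- (iii) : y = sPerm n k * (z₂ * sPerm n k)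
            have hDz2t : D z₂ (sPerm n k) = z₂ * sPerm n k := Dmul_asc hD hn hz2aff hza
            have hc1 : (z₂ * sPerm n k)⁻¹ (k+1) = sPerm n k (z₂ (k+1)) := by
              rw [mul_inv_rev, sPerm_inv hn, hz2inv]
              rfl
            have hc2 : (z₂ * sPerm n k)⁻¹ k = sPerm n k (z₂ k) := by
              rw [mul_inv_rev, sPerm_inv hn, hz2inv]
              rfl
            have hyz2 : y = sPerm n k * (z₂ * sPerm n k) := by
              rw [hG3, hDz2t, Dleft hD hn (isAffine_mul hn0 hz2aff hr) k,
                if_neg (by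
                  rw [hc1, hc2]
                  rcases sPerm_order hn (j := k) hza with h | ⟨hq, hd, _, _⟩
                  · omega
                  · exfalso
                    have h5 := per_shift hz2aff.1 hd
                    have h6 := hz2pt k
                    have h7 : z₂ k = k := by omega
                    exact hfix ⟨h7, by omega⟩)]
            calc y a = sPerm n k (z₂ (sPerm n k a)) := by rw [hyz2]; rfl
              _ = sPerm n k (sPerm n k b) := by rw [hIH]
              _ = b := sPerm_sq_apply hn k b
      · -- CASE 2: every descent is a flip; then w = sPerm n a
        push_neg at hcase
        obtain ⟨k₀, hk₀⟩ := exists_descent hn0 hwaff hne1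
        obtain ⟨hb1, _⟩ := hcase k₀ hk₀
        have hwa : w a = i + 1 := by rw [ha0, Equiv.Perm.apply_inv_self]
        have hwa1 : w (a+1) = i := by
          rw [show a + 1 = b from by omega, hb0, Equiv.Perm.apply_inv_self]
        have hordw : ∀ x : ℤ, ¬ (n:ℤ) ∣ x - a → w x < w (x+1) := by
          intro x hx
          rcases lt_trichotomy (w x) (w (x+1)) with h | h | h
          · exact h
          · exact absurd (w.injective h) (by omega)
          · exact absurd (dvd_sub_rev (hcase x h).2) hx
        set w₂ := w * sPerm n a with hw20
        have hw2aff : IsAffine n w₂ := isAffine_mul hn0 hwaff (isAffine_sPerm hn a)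
        have hasc : ∀ x : ℤ, w₂ x < w₂ (x+1) := by
          intro x
          show w (sPerm n a x) < w (sPerm n a (x+1))
          by_cases c1 : (n:ℤ) ∣ x - a
          · have hs1 : sPerm n a x = x + 1 := sPerm_apply_dvd c1
            have hs2 : sPerm n a (x+1) = x := by
              rw [sPerm_apply_dvd' hn (dvd_congr_arg c1 (by ring))]
              ring
            have e1 : w (x+1) = w (a+1) + ((x+1) - (a+1)) :=
              per_shift hwaff.1 (dvd_congr_arg c1 (by ring))
            have e2 : w x = w a + (x - a) := per_shift hwaff.1 c1
            rw [hs1, hs2]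
            omega
          · by_cases c2 : (n:ℤ) ∣ x - (a+1)
            · have hs1 : sPerm n a x = x - 1 := sPerm_apply_dvd' hn c2
              have e1 : w (x-1) = w a + ((x-1) - a) :=
                per_shift hwaff.1 (dvd_congr_arg c2 (by ring))
              by_cases d1 : (n:ℤ) ∣ (x+1) - a
              · have hs2 : sPerm n a (x+1) = x + 2 := by
                  rw [sPerm_apply_dvd d1]; ring
                have e2 : w (x+2) = w (a+1) + ((x+2) - (a+1)) := by
                  apply per_shift hwaff.1
                  have h2 : (n:ℤ) ∣ 2 := dvd_congr_arg (dvd_sub d1 c2) (by ring)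
                  exact dvd_congr_arg (dvd_add c2 h2) (by ring)
                rw [hs1, hs2]
                omega
              · have d2 : ¬ (n:ℤ) ∣ (x+1) - (a+1) := by
                  intro hc
                  apply c1
                  exact dvd_congr_arg hc (by ring)
                have hs2 : sPerm n a (x+1) = x + 1 := sPerm_apply_ndvd d1 d2
                have e2 : w x = w (a+1) + (x - (a+1)) := per_shift hwaff.1 c2
                have h5 := hordw x c1
                have h6 : w (x+1) ≠ w (x-1) := by
                  intro hc
                  have := w.injective hc
                  omega
                rw [hs1, hs2]
                omega
            · have hs1 : sPerm n a x = x := sPerm_apply_ndvd c1 c2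
              by_cases e1 : (n:ℤ) ∣ (x+1) - a
              · have hs2 : sPerm n a (x+1) = x + 2 := by
                  rw [sPerm_apply_dvd e1]; ring
                have e2 : w (x+2) = w (a+1) + ((x+2) - (a+1)) :=
                  per_shift hwaff.1 (dvd_congr_arg e1 (by ring))
                have e3 : w (x+1) = w a + ((x+1) - a) := per_shift hwaff.1 e1
                have h5 := hordw x c1
                have h6 : w x ≠ w (x+2) := by
                  intro hc
                  have := w.injective hc
                  omega
                rw [hs1, hs2]
                omega
              · have e2 : ¬ (n:ℤ) ∣ (x+1) - (a+1) := by
                  intro hc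
                  apply c1
                  exact dvd_congr_arg hc (by ring)
                have hs2 : sPerm n a (x+1) = x + 1 := sPerm_apply_ndvd e1 e2
                rw [hs1, hs2]
                exact hordw x c1
        have hw2one : w₂ = 1 := eq_one_of_ascending hn0 hw2aff hasc
        have hws : w = sPerm n a := by
          have h5 : w * sPerm n a * sPerm n a = sPerm n a := by
            rw [← hw20, hw2one, one_mul]
          rwa [mul_assoc, sPerm_sq hn, mul_one] at h5
        have hia : i = a := by
          rw [hws, sPerm_self] at hwa
          omega
        have hsne : sPerm n a ≠ 1 := by
          intro hc
          have h5 : sPerm n a a = a := by rw [hc]; rfl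
          rw [sPerm_self] at h5
          omega
        have hy : y = sPerm n a := by
          rw [← hwsq, hws, sPerm_inv hn]
          apply (hD.2.2.2 (sPerm n a) (isAffine_sPerm hn a) a).1
          rw [sPerm_sq hn, affLen_one]
          exact affLen_pos hn0 (isAffine_sPerm hn a) hsne
        rw [hy, sPerm_self]
        omega

end Demazure

end AtomAux

/-- If `y ∈ Ĩ_n`, `w ∈ A(y)`, and `b = w⁻¹ i > w⁻¹ (i+1) = a`, then `(a, b)` is a 2-cycle
of `y`, i.e. `y a = b`. -/
theorem atom_descent_cycle (n : ℕ) (hn : 2 ≤ n)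
    (D : Equiv.Perm ℤ → Equiv.Perm ℤ → Equiv.Perm ℤ) (hD : IsDemazure n D)
    (y : Equiv.Perm ℤ) (hy : IsAffine n y) (hyinv : ∀ x : ℤ, y (y x) = x)
    (w : Equiv.Perm ℤ) (hw : IsAtomOf n D y w)
    (i : ℤ) (h : w⁻¹ (i + 1) < w⁻¹ i) :
    y (w⁻¹ (i + 1)) = w⁻¹ i :=
  AtomAux.main_aux hD hn (affLen n w) w y hw (le_refl _) i h
end

section
/- Let z ∈ Ĩ_n and w ∈ A(z). Then no i ∈ ℤ satisfies w⁻¹(i) > w⁻¹(i+1) > w⁻¹(i+2); that is, the string representation of any atom inverse is 321-avoiding at consecutive positions. -/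
open Finset

theorem Equiv.Perm.apply_inv_self {α : Type*} (f : Equiv.Perm α) (x : α) : f (f⁻¹ x) = x :=
  Equiv.apply_symm_apply f x

theorem Equiv.Perm.inv_apply_self {α : Type*} (f : Equiv.Perm α) (x : α) : f⁻¹ (f x) = x :=
  Equiv.symm_apply_apply f x

namespace Aux

/-- canonical representative of `m` modulo `n` in `[1, n]` -/
def rp (n : ℕ) (m : ℤ) : ℤ := (m - 1) % (n : ℤ) + 1

lemma rp_one_le (n : ℕ) (hn : 1 ≤ n) (m : ℤ) : 1 ≤ rp n m := by
  have hn' : (0:ℤ) < (n:ℤ) := by exact_mod_cast hn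
  have : (0:ℤ) ≤ (m - 1) % (n:ℤ) := Int.emod_nonneg _ hn'.ne'
  unfold rp; omega

lemma rp_le (n : ℕ) (hn : 1 ≤ n) (m : ℤ) : rp n m ≤ n := by
  have : (m - 1) % (n:ℤ) < (n:ℤ) := Int.emod_lt_of_pos _ (by exact_mod_cast hn)
  unfold rp; omega

lemma dvd_sub_rp (n : ℕ) (m : ℤ) : (n : ℤ) ∣ m - rp n m := by
  unfold rp
  have : m - ((m-1) % n + 1) = (m - 1) - (m-1) % n := by ring
  rw [this]
  exact Int.dvd_self_sub_of_emod_eq rfl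

lemma rp_eq_of (n : ℕ) (hn : 1 ≤ n) (m a : ℤ) (h1 : 1 ≤ a) (h2 : a ≤ n)
    (hd : (n:ℤ) ∣ m - a) : rp n m = a := by
  have h3 := rp_one_le n hn m
  have h4 := rp_le n hn m
  have h5 := dvd_sub_rp n m
  have h6 : (n:ℤ) ∣ rp n m - a := by
    have : rp n m - a = (m - a) - (m - rp n m) := by ring
    rw [this]; exact dvd_sub hd h5
  rcases h6 with ⟨k, hk⟩
  have hn' : (1:ℤ) ≤ n := by exact_mod_cast hn
  have hk0 : k = 0 := by
    rcases lt_trichotomy k 0 with h|h|h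
    · have : (n:ℤ) * k ≤ -n := by nlinarith
      omega
    · exact h
    · have : (n:ℤ) ≤ (n:ℤ) * k := by nlinarith
      omega
  rw [hk0, mul_zero] at hk
  omega

lemma rp_eq_self (n : ℕ) (hn : 1 ≤ n) (a : ℤ) (h1 : 1 ≤ a) (h2 : a ≤ n) : rp n a = a :=
  rp_eq_of n hn a a h1 h2 (by simp)

end Aux
namespace Aux

lemma sPerm_apply (n : ℕ) (j x : ℤ) : sPerm n j x =
    if (n:ℤ) ∣ x - j then x + 1 else if (n:ℤ) ∣ x - (j+1) then x - 1 else x := by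
  show tFun n j (j+1) x = _
  unfold tFun
  split_ifs <;> ring

lemma sP_dvd (n : ℕ) (j x : ℤ) (h : (n:ℤ) ∣ x - j) : sPerm n j x = x + 1 := by
  rw [sPerm_apply, if_pos h]

lemma sP_dvd' (n : ℕ) (hn : 2 ≤ n) (j x : ℤ) (h : (n:ℤ) ∣ x - (j+1)) :
    sPerm n j x = x - 1 := by
  have h1 : ¬ (n:ℤ) ∣ x - j := by
    intro hc
    have : (n:ℤ) ∣ 1 := by
      have : (1:ℤ) = (x - j) - (x - (j+1)) := by ring
      rw [this]; exact dvd_sub hc h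
    have := Int.le_of_dvd one_pos this
    omega
  rw [sPerm_apply, if_neg h1, if_pos h]

lemma sP_fix (n : ℕ) (j x : ℤ) (h1 : ¬ (n:ℤ) ∣ x - j) (h2 : ¬ (n:ℤ) ∣ x - (j+1)) :
    sPerm n j x = x := by
  rw [sPerm_apply, if_neg h1, if_neg h2]

lemma sP_periodic (n : ℕ) (j x : ℤ) : sPerm n j (x + n) = sPerm n j x + n := by
  rw [sPerm_apply, sPerm_apply]
  have e1 : x + n - j = (x - j) + n := by ring
  have e2 : x + n - (j+1) = (x - (j+1)) + n := by ring
  rw [e1, e2]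
  have d1 : (n:ℤ) ∣ (x - j) + n ↔ (n:ℤ) ∣ x - j := by
    constructor <;> intro h
    · have := dvd_sub h (dvd_refl (n:ℤ)); simpa using this
    · exact dvd_add h (dvd_refl _)
  have d2 : (n:ℤ) ∣ (x - (j+1)) + n ↔ (n:ℤ) ∣ x - (j+1) := by
    constructor <;> intro h
    · have := dvd_sub h (dvd_refl (n:ℤ)); simpa using this
    · exact dvd_add h (dvd_refl _)
  rw [if_congr d1 rfl rfl, if_congr d2 rfl rfl]
  split_ifs <;> ring

lemma sP_invol (n : ℕ) (hn : 2 ≤ n) (j x : ℤ) : sPerm n j (sPerm n j x) = x := by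
  by_cases h1 : (n:ℤ) ∣ x - j
  · rw [sP_dvd n j x h1, sP_dvd' n hn j (x+1) (by simpa using h1)]
    ring
  · by_cases h2 : (n:ℤ) ∣ x - (j+1)
    · rw [sP_dvd' n hn j x h2, sP_dvd n j (x-1) (by
        have : x - 1 - j = x - (j+1) := by ring
        rw [this]; exact h2)]
      ring
    · rw [sP_fix n j x h1 h2, sP_fix n j x h1 h2]

lemma sP_sq (n : ℕ) (hn : 2 ≤ n) (j : ℤ) : sPerm n j * sPerm n j = 1 := by
  ext x
  simp [Equiv.Perm.mul_apply, sP_invol n hn j x]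

lemma sP_inv (n : ℕ) (hn : 2 ≤ n) (j : ℤ) : (sPerm n j)⁻¹ = sPerm n j := by
  rw [eq_comm, eq_inv_iff_mul_eq_one]
  exact sP_sq n hn j

end Aux
namespace Aux

lemma per_mul (n : ℕ) (f : ℤ → ℤ) (hf : ∀ i, f (i + n) = f i + n) (t : ℤ) :
    ∀ i, f (i + t * n) = f i + t * n := by
  induction t using Int.induction_on with
  | zero => simp
  | succ k ih =>
    intro i
    have e : i + (k + 1) * n = (i + k * n) + n := by ring
    rw [e, hf, ih]; ring
  | pred k ih =>
    intro i
    have e : i + (-k - 1) * n + n = i + (-k) * n := by ring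
    have := hf (i + (-k - 1) * n)
    rw [e, ih] at this
    omega

lemma per_dvd_apply (n : ℕ) (f : ℤ → ℤ) (hf : ∀ i, f (i + n) = f i + n)
    {a b : ℤ} (h : (n:ℤ) ∣ a - b) : f a = f b + (a - b) := by
  rcases h with ⟨t, ht⟩
  rw [mul_comm] at ht
  have : a = b + t * n := by omega
  rw [this, per_mul n f hf t b]; omega

lemma perfix_mul (n : ℕ) (f : ℤ → ℤ) (hf : ∀ i, f (i + n) = f i) (t : ℤ) :
    ∀ i, f (i + t * n) = f i := by
  induction t using Int.induction_on with
  | zero => simp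
  | succ k ih =>
    intro i
    have e : i + (k + 1) * n = (i + k * n) + n := by ring
    rw [e, hf, ih]
  | pred k ih =>
    intro i
    have e : i + (-k - 1) * n + n = i + (-k) * n := by ring
    have := hf (i + (-k - 1) * n)
    rw [e, ih] at this
    rw [← this]

lemma perfix_dvd (n : ℕ) (f : ℤ → ℤ) (hf : ∀ i, f (i + n) = f i)
    {a b : ℤ} (h : (n:ℤ) ∣ a - b) : f a = f b := by
  rcases h with ⟨t, ht⟩
  rw [mul_comm] at ht
  have : a = b + t * n := by omega
  rw [this, perfix_mul n f hf t b]

lemma aff_inv_per (n : ℕ) (x : Equiv.Perm ℤ) (hx : ∀ i, x (i + n) = x i + n) :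
    ∀ i, x⁻¹ (i + n) = x⁻¹ i + n := by
  intro i
  apply x.injective
  rw [Equiv.Perm.apply_inv_self, hx, Equiv.Perm.apply_inv_self]

/-- reindexing sums of `n`-periodic functions along an affine permutation -/
lemma sum_reindex (n : ℕ) (hn : 1 ≤ n) (x : Equiv.Perm ℤ) (hx : ∀ i, x (i + n) = x i + n)
    (f : ℤ → ℤ) (hf : ∀ i, f (i + n) = f i) :
    ∑ i ∈ Finset.Icc (1:ℤ) (n:ℤ), f (x i) = ∑ i ∈ Finset.Icc (1:ℤ) (n:ℤ), f i := by
  have hxinv := aff_inv_per n x hx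
  apply Finset.sum_nbij' (fun k => rp n (x k)) (fun k => rp n (x⁻¹ k))
  · intro a _
    simp only [Finset.mem_Icc]
    exact ⟨rp_one_le n hn _, rp_le n hn _⟩
  · intro a _
    simp only [Finset.mem_Icc]
    exact ⟨rp_one_le n hn _, rp_le n hn _⟩
  · intro a ha
    simp only [Finset.mem_Icc] at ha
    have h1 : (n:ℤ) ∣ x a - rp n (x a) := dvd_sub_rp n _
    have h2 : x⁻¹ (rp n (x a)) = x⁻¹ (x a) + (rp n (x a) - x a) := by
      apply per_dvd_apply n _ hxinv
      have : rp n (x a) - x a = -(x a - rp n (x a)) := by ring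
      rw [this]; exact (dvd_neg).2 h1
    rw [h2, Equiv.Perm.inv_apply_self]
    apply rp_eq_of n hn _ _ ha.1 ha.2
    have : a + (rp n (x a) - x a) - a = -(x a - rp n (x a)) := by ring
    rw [this]; exact (dvd_neg).2 h1
  · intro a ha
    simp only [Finset.mem_Icc] at ha
    have h1 : (n:ℤ) ∣ x⁻¹ a - rp n (x⁻¹ a) := dvd_sub_rp n _
    have h2 : x (rp n (x⁻¹ a)) = x (x⁻¹ a) + (rp n (x⁻¹ a) - x⁻¹ a) := by
      apply per_dvd_apply n _ hx
      have : rp n (x⁻¹ a) - x⁻¹ a = -(x⁻¹ a - rp n (x⁻¹ a)) := by ring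
      rw [this]; exact (dvd_neg).2 h1
    rw [h2, Equiv.Perm.apply_inv_self]
    apply rp_eq_of n hn _ _ ha.1 ha.2
    have : a + (rp n (x⁻¹ a) - x⁻¹ a) - a = -(x⁻¹ a - rp n (x⁻¹ a)) := by ring
    rw [this]; exact (dvd_neg).2 h1
  · intro a _
    exact perfix_dvd n f hf (dvd_sub_rp n (x a))

lemma isAffine_one (n : ℕ) : IsAffine n 1 := by
  constructor
  · intro i; simp
  · simp

lemma IsAffine.mul {n : ℕ} (hn : 1 ≤ n) {x y : Equiv.Perm ℤ}
    (hx : IsAffine n x) (hy : IsAffine n y) : IsAffine n (x * y) := by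
  obtain ⟨hx1, hx2⟩ := hx
  obtain ⟨hy1, hy2⟩ := hy
  constructor
  · intro i
    simp only [Equiv.Perm.mul_apply]
    rw [hy1, hx1]
  · have key : ∑ i ∈ Finset.Icc (1:ℤ) (n:ℤ), (x (y i) - y i) = 0 := by
      have hf : ∀ i, (x (i + (n:ℤ)) - (i + n)) = x i - i := by
        intro i; rw [hx1]; ring
      calc ∑ i ∈ Finset.Icc (1:ℤ) (n:ℤ), (x (y i) - y i)
          = ∑ i ∈ Finset.Icc (1:ℤ) (n:ℤ), (fun k => x k - k) (y i) := rfl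
        _ = ∑ i ∈ Finset.Icc (1:ℤ) (n:ℤ), (x i - i) :=
            sum_reindex n hn y hy1 (fun k => x k - k) hf
        _ = 0 := hx2
    have : ∑ i ∈ Finset.Icc (1:ℤ) (n:ℤ), ((x * y) i - i)
        = ∑ i ∈ Finset.Icc (1:ℤ) (n:ℤ), ((x (y i) - y i) + (y i - i)) := by
      apply Finset.sum_congr rfl
      intro a _
      simp only [Equiv.Perm.mul_apply]; ring
    rw [this, Finset.sum_add_distrib, key, hy2]
    norm_num

lemma IsAffine.inv {n : ℕ} (hn : 1 ≤ n) {x : Equiv.Perm ℤ}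
    (hx : IsAffine n x) : IsAffine n x⁻¹ := by
  obtain ⟨hx1, hx2⟩ := hx
  refine ⟨aff_inv_per n x hx1, ?_⟩
  have hf : ∀ i, (x⁻¹ (i + (n:ℤ)) - (i + n)) = x⁻¹ i - i := by
    intro i; rw [aff_inv_per n x hx1]; ring
  have := sum_reindex n hn x hx1 (fun k => x⁻¹ k - k) hf
  rw [← this]
  have : ∑ i ∈ Finset.Icc (1:ℤ) (n:ℤ), (x⁻¹ (x i) - x i)
      = ∑ i ∈ Finset.Icc (1:ℤ) (n:ℤ), (-(x i - i)) := by
    apply Finset.sum_congr rfl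
    intro a _
    rw [Equiv.Perm.inv_apply_self]; ring
  rw [this, Finset.sum_neg_distrib, hx2, neg_zero]

end Aux
namespace Aux

lemma dvd_iff_rp_eq (n : ℕ) (hn : 1 ≤ n) (j i : ℤ) (h1 : 1 ≤ i) (h2 : i ≤ n) :
    (n:ℤ) ∣ i - j ↔ i = rp n j := by
  constructor
  · intro h
    exact (rp_eq_of n hn j i h1 h2 (by
      have : j - i = -(i - j) := by ring
      rw [this]; exact (dvd_neg).2 h)).symm
  · intro h
    subst h
    have := dvd_sub_rp n j
    have e : rp n j - j = -(j - rp n j) := by ring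
    rw [e]; exact (dvd_neg).2 this

lemma isAffine_sPerm (n : ℕ) (hn : 2 ≤ n) (j : ℤ) : IsAffine n (sPerm n j) := by
  have hn1 : 1 ≤ n := by omega
  refine ⟨fun i => sP_periodic n j i, ?_⟩
  have hne : rp n j ≠ rp n (j+1) := by
    intro h
    have d1 := dvd_sub_rp n j
    have d2 := dvd_sub_rp n (j+1)
    rw [← h] at d2
    have : (n:ℤ) ∣ 1 := by
      have e : (1:ℤ) = (j + 1 - rp n j) - (j - rp n j) := by ring
      rw [e]; exact dvd_sub d2 d1
    have := Int.le_of_dvd one_pos this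
    omega
  have key : ∀ i ∈ Finset.Icc (1:ℤ) (n:ℤ), sPerm n j i - i =
      (if i = rp n j then (1:ℤ) else 0) + (if i = rp n (j+1) then (-1:ℤ) else 0) := by
    intro i hi
    simp only [Finset.mem_Icc] at hi
    by_cases h1 : (n:ℤ) ∣ i - j
    · have e1 : i = rp n j := (dvd_iff_rp_eq n hn1 j i hi.1 hi.2).1 h1
      have e2 : i ≠ rp n (j+1) := by
        intro h
        rw [e1] at h
        exact hne h
      rw [sP_dvd n j i h1, if_pos e1, if_neg e2]; ring
    · by_cases h2 : (n:ℤ) ∣ i - (j+1)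
      · have e2 : i = rp n (j+1) := (dvd_iff_rp_eq n hn1 (j+1) i hi.1 hi.2).1 h2
        have e1 : i ≠ rp n j := fun h => h1 ((dvd_iff_rp_eq n hn1 j i hi.1 hi.2).2 h)
        rw [sP_dvd' n hn j i h2, if_neg e1, if_pos e2]; ring
      · have e1 : i ≠ rp n j := fun h => h1 ((dvd_iff_rp_eq n hn1 j i hi.1 hi.2).2 h)
        have e2 : i ≠ rp n (j+1) := fun h => h2 ((dvd_iff_rp_eq n hn1 (j+1) i hi.1 hi.2).2 h)
        rw [sP_fix n j i h1 h2, if_neg e1, if_neg e2]; ring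
  rw [Finset.sum_congr rfl key, Finset.sum_add_distrib,
    Finset.sum_ite_eq' (Finset.Icc (1:ℤ) (n:ℤ)) (rp n j) (fun _ => (1:ℤ)),
    Finset.sum_ite_eq' (Finset.Icc (1:ℤ) (n:ℤ)) (rp n (j+1)) (fun _ => (-1:ℤ))]
  have m1 : rp n j ∈ Finset.Icc (1:ℤ) (n:ℤ) := by
    simp only [Finset.mem_Icc]; exact ⟨rp_one_le n hn1 _, rp_le n hn1 _⟩
  have m2 : rp n (j+1) ∈ Finset.Icc (1:ℤ) (n:ℤ) := by
    simp only [Finset.mem_Icc]; exact ⟨rp_one_le n hn1 _, rp_le n hn1 _⟩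
  rw [if_pos m1, if_pos m2]
  ring

end Aux
namespace Aux

def InvS (n : ℕ) (x : Equiv.Perm ℤ) : Set (ℤ × ℤ) :=
  {p | 1 ≤ p.1 ∧ p.1 ≤ (n:ℤ) ∧ p.1 < p.2 ∧ x p.2 < x p.1}

lemma affLen_eq_ncard (n : ℕ) (x : Equiv.Perm ℤ) : affLen n x = (InvS n x).ncard := rfl

lemma invS_finite (n : ℕ) (hn : 1 ≤ n) (x : Equiv.Perm ℤ) (hx : IsAffine n x) :
    (InvS n x).Finite := by
  have hne : ((Finset.Icc (1:ℤ) (n:ℤ)).image x).Nonempty := by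
    apply Finset.Nonempty.image
    rw [Finset.nonempty_Icc]
    exact_mod_cast hn
  set M := ((Finset.Icc (1:ℤ) (n:ℤ)).image x).max' hne with hM
  set m := ((Finset.Icc (1:ℤ) (n:ℤ)).image x).min' hne with hm
  apply Set.Finite.subset (Finset.finite_toSet
    ((Finset.Icc (1:ℤ) (n:ℤ)) ×ˢ (Finset.Icc (2:ℤ) ((n:ℤ) + (M - m)))))
  rintro ⟨p, q⟩ ⟨h1, h2, h3, h4⟩
  have h4' : x q < x p := h4
  simp only [Finset.coe_product, Set.mem_prod, Finset.mem_coe, Finset.mem_Icc]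
  refine ⟨⟨h1, h2⟩, by omega, ?_⟩
  have hr1 := rp_one_le n hn q
  have hr2 := rp_le n hn q
  have hd : (n:ℤ) ∣ q - rp n q := dvd_sub_rp n q
  have hq : x q = x (rp n q) + (q - rp n q) := per_dvd_apply n x hx.1 hd
  have hmle : m ≤ x (rp n q) := by
    apply Finset.min'_le
    apply Finset.mem_image_of_mem
    rw [Finset.mem_Icc]
    exact ⟨hr1, hr2⟩
  have hMge : x p ≤ M := by
    apply Finset.le_max'
    apply Finset.mem_image_of_mem
    rw [Finset.mem_Icc]
    exact ⟨h1, h2⟩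
  omega

end Aux
namespace Aux

lemma dvd_small_eq_zero (n : ℕ) (d : ℤ) (hd : (n:ℤ) ∣ d) (h1 : -(n:ℤ) < d)
    (h2 : d < n) : d = 0 := by
  rcases eq_or_ne d 0 with h | h
  · exact h
  · exfalso
    have := Int.le_of_dvd (abs_pos.mpr h) ((dvd_abs _ _).mpr hd)
    rcases abs_cases d with ⟨e1, _⟩ | ⟨e1, _⟩ <;> omega

lemma sP_cases (n : ℕ) (hn : 2 ≤ n) (j c : ℤ) :
    ((n:ℤ) ∣ c - j ∧ ¬(n:ℤ) ∣ c - (j+1) ∧ sPerm n j c = c + 1) ∨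
    ((n:ℤ) ∣ c - (j+1) ∧ ¬(n:ℤ) ∣ c - j ∧ sPerm n j c = c - 1) ∨
    (¬(n:ℤ) ∣ c - j ∧ ¬(n:ℤ) ∣ c - (j+1) ∧ sPerm n j c = c) := by
  have hone : ¬ ((n:ℤ) ∣ c - j ∧ (n:ℤ) ∣ c - (j+1)) := by
    rintro ⟨d1, d2⟩
    have : (n:ℤ) ∣ 1 := by
      have e : (1:ℤ) = (c - j) - (c - (j+1)) := by ring
      rw [e]; exact dvd_sub d1 d2
    have := Int.le_of_dvd one_pos this
    omega
  by_cases h1 : (n:ℤ) ∣ c - j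
  · exact Or.inl ⟨h1, fun h2 => hone ⟨h1, h2⟩, sP_dvd n j c h1⟩
  · by_cases h2 : (n:ℤ) ∣ c - (j+1)
    · exact Or.inr (Or.inl ⟨h2, h1, sP_dvd' n hn j c h2⟩)
    · exact Or.inr (Or.inr ⟨h1, h2, sP_fix n j c h1 h2⟩)

lemma sP_strict (n : ℕ) (hn : 2 ≤ n) (j a b : ℤ) (hab : a < b)
    (hns : ¬(b = a + 1 ∧ (n:ℤ) ∣ a - j)) : sPerm n j a < sPerm n j b := by
  have hdvd : ∀ d : ℤ, (n:ℤ) ∣ d → 0 < d → 2 ≤ d := by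
    intro d h hd
    have := Int.le_of_dvd hd h
    omega
  rcases sP_cases n hn j a with ⟨da, _, ea⟩ | ⟨da, da', ea⟩ | ⟨da, da', ea⟩ <;>
    rcases sP_cases n hn j b with ⟨db, _, eb⟩ | ⟨db, db', eb⟩ | ⟨db, db', eb⟩
  · omega
  · -- a ≡ j, b ≡ j+1 : n ∣ b - a - 1
    have hd : (n:ℤ) ∣ b - a - 1 := by
      have e : b - a - 1 = (b - (j+1)) - (a - j) := by ring
      rw [e]; exact dvd_sub db da
    rcases eq_or_ne (b - a - 1) 0 with h0 | h0
    · exact absurd ⟨by omega, da⟩ hns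
    · have := hdvd _ hd (by omega)
      omega
  · -- a ≡ j, b generic : if b = a + 1 special
    rcases eq_or_ne b (a+1) with h0 | h0
    · exact absurd ⟨h0, da⟩ hns
    · omega
  · omega
  · -- a ≡ j+1, b ≡ j+1: n ∣ b - a
    have hd : (n:ℤ) ∣ b - a := by
      have e : b - a = (b - (j+1)) - (a - (j+1)) := by ring
      rw [e]; exact dvd_sub db da
    have := hdvd _ hd (by omega)
    omega
  · omega
  · omega
  · -- a generic, b ≡ j+1 : b ≠ a+1 since a not ≡ j
    rcases eq_or_ne b (a+1) with h0 | h0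
    · exfalso
      apply da
      have e : a - j = b - (j+1) := by omega
      rw [e]; exact db
    · omega
  · omega

lemma sP_res_right (n : ℕ) (hn : 2 ≤ n) (j a : ℤ) :
    (n:ℤ) ∣ sPerm n j a - j ↔ (n:ℤ) ∣ a - (j+1) := by
  rcases sP_cases n hn j a with ⟨da, da', ea⟩ | ⟨da, da', ea⟩ | ⟨da, da', ea⟩ <;> rw [ea]
  · constructor
    · intro h
      exfalso
      have : (n:ℤ) ∣ 1 := by
        have e : (1:ℤ) = (a + 1 - j) - (a - j) := by ring
        rw [e]; exact dvd_sub h da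
      have := Int.le_of_dvd one_pos this
      omega
    · intro h; exact absurd h da'
  · constructor
    · intro _; exact da
    · intro _
      have e : a - 1 - j = a - (j+1) := by ring
      rw [e]; exact da
  · constructor
    · intro h; exact absurd h da
    · intro h; exact absurd h da'

end Aux
namespace Aux

lemma affLen_succ (n : ℕ) (hn : 2 ≤ n) (x : Equiv.Perm ℤ) (hx : IsAffine n x)
    (j : ℤ) (h : x j < x (j+1)) :
    affLen n (x * sPerm n j) = affLen n x + 1 := by
  have hn1 : 1 ≤ n := by omega
  set s := sPerm n j with hs
  set y := x * s with hy
  have hy_apply : ∀ a, y a = x (s a) := fun a => rfl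
  have hyaff : IsAffine n y := IsAffine.mul hn1 hx (isAffine_sPerm n hn j)
  set p0 := rp n j with hp0
  have hp01 : 1 ≤ p0 := rp_one_le n hn1 j
  have hp0n : p0 ≤ (n:ℤ) := rp_le n hn1 j
  have hdp0 : (n:ℤ) ∣ p0 - j := by
    have := dvd_sub_rp n j
    have e : p0 - j = -(j - rp n j) := by rw [hp0]; ring
    rw [e]; exact (dvd_neg).2 this
  -- the special pair
  set Sp : ℤ × ℤ := (p0, p0 + 1) with hSp
  -- the pairing map
  set F : ℤ × ℤ → ℤ × ℤ := fun r =>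
    if r.2 = r.1 + 1 ∧ (n:ℤ) ∣ r.1 - j then r
    else (rp n (s r.1), s r.2 + (rp n (s r.1) - s r.1)) with hF
  -- basic properties of F on good non-special pairs
  have hkey : ∀ r : ℤ × ℤ, 1 ≤ r.1 → r.1 ≤ (n:ℤ) → r.1 < r.2 →
      ¬(r.2 = r.1 + 1 ∧ (n:ℤ) ∣ r.1 - j) →
      ∃ c : ℤ, (n:ℤ) ∣ c ∧ F r = (s r.1 + c, s r.2 + c) ∧
        1 ≤ s r.1 + c ∧ s r.1 + c ≤ (n:ℤ) ∧ s r.1 + c < s r.2 + c ∧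
        ¬((F r).2 = (F r).1 + 1 ∧ (n:ℤ) ∣ (F r).1 - j) := by
    intro r h1 h2 h3 hns
    have hc : (n:ℤ) ∣ rp n (s r.1) - s r.1 := by
      have := dvd_sub_rp n (s r.1)
      have e : rp n (s r.1) - s r.1 = -(s r.1 - rp n (s r.1)) := by ring
      rw [e]; exact (dvd_neg).2 this
    refine ⟨rp n (s r.1) - s r.1, hc, ?_, ?_, ?_, ?_, ?_⟩
    · rw [hF]; simp only [if_neg hns]
      rw [Prod.mk.injEq]
      exact ⟨by ring, rfl⟩
    · have := rp_one_le n hn1 (s r.1); omega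
    · have := rp_le n hn1 (s r.1); omega
    · have := sP_strict n hn j r.1 r.2 h3 hns
      rw [← hs] at this
      omega
    · -- image is not special
      rw [hF]; simp only [if_neg hns]
      rintro ⟨e1, e2⟩
      try simp only at e1 e2
      -- e2 : n ∣ rp n (s r.1) - j, so n ∣ s r.1 - j, so n ∣ r.1 - (j+1)
      have d1 : (n:ℤ) ∣ s r.1 - j := by
        have e : s r.1 - j = (rp n (s r.1) - j) - (rp n (s r.1) - s r.1) := by ring
        rw [e]; exact dvd_sub e2 hc
      have d2 : (n:ℤ) ∣ r.1 - (j+1) := (sP_res_right n hn j r.1).1 d1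
      -- e1 : s r.2 + c = rp n (s r.1) + 1 = s r.1 + c + 1, so s r.2 = s r.1 + 1
      have e3 : s r.2 = s r.1 + 1 := by omega
      -- then n ∣ s r.2 - (j+1), apply... n ∣ s r.2 - j - 1; s r.2 - (j+1) = s r.1 - j ≡ 0
      have d3 : (n:ℤ) ∣ s r.2 - (j+1) := by
        have e : s r.2 - (j+1) = s r.1 - j := by omega
        rw [e]; exact d1
      -- s r.2 ≡ j+1 means r.2 ≡ j (classes swap), so s r.2 = r.2 + 1
      have d4 : (n:ℤ) ∣ r.2 - j := by
        rcases sP_cases n hn j r.2 with ⟨da, da', ea⟩ | ⟨da, da', ea⟩ | ⟨da, da', ea⟩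
        · exact da
        · exfalso; rw [ea] at d3
          have hone : (n:ℤ) ∣ 1 := by
            have e : (1:ℤ) = (r.2 - (j+1)) - (r.2 - 1 - (j+1)) := by ring
            rw [e]; exact dvd_sub da d3
          have := Int.le_of_dvd one_pos hone
          omega
        · exfalso; rw [ea] at d3; exact da' d3
      have e5 : s r.2 = r.2 + 1 := sP_dvd n j r.2 d4
      have e6 : s r.1 = r.1 - 1 := sP_dvd' n hn j r.1 d2
      rw [e5, e6] at e3
      omega
  -- value transfer: x on shifted images equals y on original coordinates plus shift
  have htransx : ∀ (a c : ℤ), (n:ℤ) ∣ c → x (s a + c) = y a + c := by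
    intro a c hc
    have h0 := per_dvd_apply n x hx.1 (a := s a + c) (b := s a) (by simpa using hc)
    rw [hy_apply]
    omega
  have htransy : ∀ (a c : ℤ), (n:ℤ) ∣ c → y (s a + c) = x a + c := by
    intro a c hc
    have h0 := per_dvd_apply n y hyaff.1 (a := s a + c) (b := s a) (by simpa using hc)
    have h1 : y (s a) = x a := by rw [hy_apply, sP_invol n hn j a]
    omega
  -- F ∘ F = id on good non-special pairs
  have hFF : ∀ r : ℤ × ℤ, 1 ≤ r.1 → r.1 ≤ (n:ℤ) → r.1 < r.2 →
      ¬(r.2 = r.1 + 1 ∧ (n:ℤ) ∣ r.1 - j) → F (F r) = r := by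
    intro r h1 h2 h3 hns
    obtain ⟨c, hc, hFr, hb1, hb2, hb3, hns'⟩ := hkey r h1 h2 h3 hns
    obtain ⟨c', hc', hFr', hb1', hb2', _, _⟩ := hkey (F r) (by rw [hFr]; exact hb1)
      (by rw [hFr]; exact hb2) (by rw [hFr]; exact hb3) hns'
    rw [hFr] at hFr' hb1' hb2' ⊢
    simp only at hFr' hb1' hb2'
    have hsper : ∀ i : ℤ, s (i + (n:ℕ)) = s i + (n:ℕ) := by
      intro i
      rw [hs]
      exact sP_periodic n j i
    have es1 : s (s r.1 + c) = r.1 + c := by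
      have h0 := per_dvd_apply n s hsper (a := s r.1 + c) (b := s r.1) (by simpa using hc)
      have h1 : s (s r.1) = r.1 := by rw [hs]; exact sP_invol n hn j r.1
      omega
    have es2 : s (s r.2 + c) = r.2 + c := by
      have h0 := per_dvd_apply n s hsper (a := s r.2 + c) (b := s r.2) (by simpa using hc)
      have h1 : s (s r.2) = r.2 := by rw [hs]; exact sP_invol n hn j r.2
      omega
    rw [es1] at hFr' hb1' hb2'
    rw [es2] at hFr'
    have hcc : c + c' = 0 := by
      apply dvd_small_eq_zero n (c + c') (dvd_add hc hc') <;> omega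
    rw [hFr', Prod.ext_iff]
    constructor
    · show r.1 + c + c' = r.1
      omega
    · show r.2 + c + c' = r.2
      omega
  -- special pair facts
  have hxsp : x p0 = x j + (p0 - j) := per_dvd_apply n x hx.1 hdp0
  have hxsp' : x (p0 + 1) = x (j+1) + (p0 - j) := by
    have h0 := per_dvd_apply n x hx.1 (a := p0 + 1) (b := j + 1) (by
      have e : p0 + 1 - (j + 1) = p0 - j := by ring
      rw [e]; exact hdp0)
    omega
  have hyp0 : y p0 = x (p0 + 1) := by
    rw [hy_apply, sP_dvd n j p0 hdp0]
  have hyp0' : y (p0 + 1) = x p0 := by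
    rw [hy_apply, sP_dvd' n hn j (p0+1) (by
      have e : p0 + 1 - (j + 1) = p0 - j := by ring
      rw [e]; exact hdp0)]
    norm_num
  have hSpy : Sp ∈ InvS n y := by
    rw [hSp]
    refine ⟨hp01, hp0n, ?_, ?_⟩
    · show p0 < p0 + 1
      omega
    · show y (p0 + 1) < y p0
      rw [hyp0, hyp0', hxsp, hxsp']
      omega
  have hSpx : Sp ∉ InvS n x := by
    rw [hSp]
    rintro ⟨_, _, _, h4⟩
    revert h4
    show ¬ x (p0 + 1) < x p0
    rw [hxsp, hxsp']
    omega
  -- non-specialness of elements of InvS n x, and that InvS n y members ≠ Sp are non-special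
  have hns_of_ne : ∀ r : ℤ × ℤ, 1 ≤ r.1 → r.1 ≤ (n:ℤ) → r ≠ Sp →
      ¬(r.2 = r.1 + 1 ∧ (n:ℤ) ∣ r.1 - j) := by
    rintro r h1 h2 hne ⟨e1, e2⟩
    apply hne
    have : r.1 = p0 := by
      rw [hp0]
      exact (rp_eq_of n hn1 j r.1 h1 h2 (by
        have e : j - r.1 = -(r.1 - j) := by ring
        rw [e]; exact (dvd_neg).2 e2)).symm
    rw [hSp, Prod.ext_iff]
    exact ⟨this, by omega⟩
  have hxns : ∀ r ∈ InvS n x, ¬(r.2 = r.1 + 1 ∧ (n:ℤ) ∣ r.1 - j) := by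
    intro r hr
    exact hns_of_ne r hr.1 hr.2.1 (fun he => hSpx (he ▸ hr))
  -- F maps InvS x into InvS y
  have hmapxy : ∀ r ∈ InvS n x, F r ∈ InvS n y := by
    intro r hr
    obtain ⟨h1, h2, h3, h4⟩ := hr
    obtain ⟨c, hc, hFr, hb1, hb2, hb3, _⟩ := hkey r h1 h2 h3 (hxns r ⟨h1, h2, h3, h4⟩)
    rw [hFr]
    refine ⟨hb1, hb2, hb3, ?_⟩
    show y (s r.2 + c) < y (s r.1 + c)
    rw [htransy r.2 c hc, htransy r.1 c hc]
    omega
  -- F maps InvS y \ {Sp} into InvS x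
  have hmapyx : ∀ r ∈ InvS n y, r ≠ Sp → F r ∈ InvS n x := by
    intro r hr hne
    obtain ⟨h1, h2, h3, h4⟩ := hr
    have hns := hns_of_ne r h1 h2 hne
    obtain ⟨c, hc, hFr, hb1, hb2, hb3, _⟩ := hkey r h1 h2 h3 hns
    rw [hFr]
    refine ⟨hb1, hb2, hb3, ?_⟩
    show x (s r.2 + c) < x (s r.1 + c)
    rw [htransx r.2 c hc, htransx r.1 c hc]
    omega
  -- the set identity
  have hset : InvS n y = insert Sp (F '' InvS n x) := by
    apply Set.eq_of_subset_of_subset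
    · intro r hr
      rcases eq_or_ne r Sp with he | he
      · exact he ▸ Set.mem_insert _ _
      · apply Set.mem_insert_of_mem
        have hns := hns_of_ne r hr.1 hr.2.1 he
        exact ⟨F r, hmapyx r hr he, hFF r hr.1 hr.2.1 hr.2.2.1 hns⟩
    · intro r hr
      rcases Set.mem_insert_iff.1 hr with he | ⟨q, hq, he⟩
      · exact he ▸ hSpy
      · exact he ▸ hmapxy q hq
  -- Sp is not in the image of InvS x
  have hSpim : Sp ∉ F '' InvS n x := by
    rintro ⟨q, hq, he⟩
    obtain ⟨h1, h2, h3, h4⟩ := hq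
    have hns := hxns q ⟨h1, h2, h3, h4⟩
    obtain ⟨c, hc, hFr, hb1, hb2, hb3, hns'⟩ := hkey q h1 h2 h3 hns
    apply hns'
    rw [he, hSp]
    exact ⟨by norm_num, by simpa using hdp0⟩
  -- injectivity of F on InvS x
  have hinj : Set.InjOn F (InvS n x) := by
    intro r hr r' hr' he
    have e1 := hFF r hr.1 hr.2.1 hr.2.2.1 (hxns r hr)
    have e2 := hFF r' hr'.1 hr'.2.1 hr'.2.2.1 (hxns r' hr')
    rw [← e1, ← e2, he]
  -- counting
  have hfin : (F '' InvS n x).Finite := (invS_finite n hn1 x hx).image F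
  rw [affLen_eq_ncard, affLen_eq_ncard, hset,
    Set.ncard_insert_of_notMem hSpim hfin, Set.ncard_image_of_injOn hinj]

end Aux
namespace Aux

lemma sP_at (n : ℕ) (j : ℤ) : sPerm n j j = j + 1 :=
  sP_dvd n j j (by simp)

lemma sP_at' (n : ℕ) (hn : 2 ≤ n) (j : ℤ) : sPerm n j (j+1) = j := by
  rw [sP_dvd' n hn j (j+1) (by simp)]
  ring

lemma affLen_pred (n : ℕ) (hn : 2 ≤ n) (x : Equiv.Perm ℤ) (hx : IsAffine n x)
    (j : ℤ) (h : x (j+1) < x j) :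
    affLen n x = affLen n (x * sPerm n j) + 1 := by
  have hn1 : 1 ≤ n := by omega
  set y := x * sPerm n j with hy
  have hyaff : IsAffine n y := IsAffine.mul hn1 hx (isAffine_sPerm n hn j)
  have h1 : y j = x (j+1) := by
    show x (sPerm n j j) = x (j+1)
    rw [sP_at]
  have h2 : y (j+1) = x j := by
    show x (sPerm n j (j+1)) = x j
    rw [sP_at' n hn]
  have h3 : y j < y (j+1) := by rw [h1, h2]; exact h
  have h4 := affLen_succ n hn y hyaff j h3
  have h5 : y * sPerm n j = x := by
    rw [hy, mul_assoc, sP_sq n hn j, mul_one]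
  rw [h5] at h4
  omega

lemma affLen_inv (n : ℕ) (hn : 1 ≤ n) (x : Equiv.Perm ℤ) (hx : IsAffine n x) :
    affLen n x⁻¹ = affLen n x := by
  classical
  set G : Equiv.Perm ℤ → ℤ × ℤ → ℤ × ℤ :=
    fun w r => (rp n (w r.2), w r.1 + (rp n (w r.2) - w r.2)) with hG
  have key : ∀ w : Equiv.Perm ℤ, IsAffine n w → ∀ r ∈ InvS n w,
      G w r ∈ InvS n w⁻¹ ∧ G w⁻¹ (G w r) = r := by
    intro w hw r hr
    obtain ⟨h1, h2, h3, h4⟩ := hr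
    have hwinv : ∀ i : ℤ, w⁻¹ (i + (n:ℕ)) = w⁻¹ i + (n:ℕ) := aff_inv_per n w hw.1
    set c := rp n (w r.2) - w r.2 with hc
    have hcd : (n:ℤ) ∣ c := by
      have := dvd_sub_rp n (w r.2)
      have e : c = -(w r.2 - rp n (w r.2)) := by rw [hc]; ring
      rw [e]; exact (dvd_neg).2 this
    have hGr : G w r = (w r.2 + c, w r.1 + c) := by
      rw [hG]
      simp only
      rw [Prod.mk.injEq]
      exact ⟨by rw [hc]; ring, rfl⟩
    have e1 : w⁻¹ (w r.2 + c) = r.2 + c := by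
      have h0 := per_dvd_apply n (fun i => w⁻¹ i) hwinv (a := w r.2 + c) (b := w r.2) (by simpa using hcd)
      have h1' : w⁻¹ (w r.2) = r.2 := Equiv.Perm.inv_apply_self w r.2
      omega
    have e2 : w⁻¹ (w r.1 + c) = r.1 + c := by
      have h0 := per_dvd_apply n (fun i => w⁻¹ i) hwinv (a := w r.1 + c) (b := w r.1) (by simpa using hcd)
      have h1' : w⁻¹ (w r.1) = r.1 := Equiv.Perm.inv_apply_self w r.1
      omega
    have hmem : G w r ∈ InvS n w⁻¹ := by
      rw [hGr]
      refine ⟨?_, ?_, by show w r.2 + c < w r.1 + c; omega, ?_⟩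
      · show 1 ≤ w r.2 + c
        have := rp_one_le n hn (w r.2); omega
      · show w r.2 + c ≤ (n:ℤ)
        have := rp_le n hn (w r.2); omega
      · show w⁻¹ (w r.1 + c) < w⁻¹ (w r.2 + c)
        rw [e1, e2]
        omega
    refine ⟨hmem, ?_⟩
    rw [hGr, hG]
    simp only
    rw [e1, e2]
    have hrp : rp n (r.1 + c) = r.1 := by
      apply rp_eq_of n hn _ _ h1 h2
      simpa using hcd
    rw [hrp, Prod.mk.injEq]
    constructor
    · rfl
    · omega
  have him : InvS n x = G x⁻¹ '' InvS n x⁻¹ := by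
    apply Set.eq_of_subset_of_subset
    · intro r hr
      exact ⟨G x r, (key x hx r hr).1, (key x hx r hr).2⟩
    · intro r hr
      obtain ⟨q, hq, he⟩ := hr
      have := (key x⁻¹ (IsAffine.inv hn hx) q hq).1
      rw [inv_inv] at this
      exact he ▸ this
  have hinj : Set.InjOn (G x⁻¹) (InvS n x⁻¹) := by
    intro r hr r' hr' he
    have e1 := (key x⁻¹ (IsAffine.inv hn hx) r hr).2
    have e2 := (key x⁻¹ (IsAffine.inv hn hx) r' hr').2
    rw [← e1, ← e2, he]
  rw [affLen_eq_ncard, affLen_eq_ncard, him, Set.ncard_image_of_injOn hinj]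

lemma affLen_one (n : ℕ) : affLen n 1 = 0 := by
  rw [affLen_eq_ncard]
  convert Set.ncard_empty (ℤ × ℤ)
  apply Set.eq_empty_iff_forall_notMem.2
  rintro r ⟨h1, h2, h3, h4⟩
  have : r.2 < r.1 := h4
  omega

lemma affLen_sPerm (n : ℕ) (hn : 2 ≤ n) (j : ℤ) : affLen n (sPerm n j) = 1 := by
  have := affLen_succ n hn 1 (isAffine_one n) j (by
    show (j:ℤ) < j + 1
    omega)
  rwa [one_mul, affLen_one] at this

lemma apply_ne_succ (x : Equiv.Perm ℤ) (k : ℤ) : x k ≠ x (k+1) := by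
  intro h
  have := x.injective h
  omega

lemma eq_one_of_increasing (n : ℕ) (hn : 1 ≤ n) (x : Equiv.Perm ℤ)
    (hx : IsAffine n x) (h : ∀ j, x j < x (j+1)) : x = 1 := by
  have mono : StrictMono x := strictMono_int_of_lt_succ h
  have step : ∀ j, x (j+1) = x j + 1 := by
    intro j
    have h1 : x (x⁻¹ (x j + 1)) = x j + 1 := Equiv.Perm.apply_inv_self x (x j + 1)
    have h2 : j < x⁻¹ (x j + 1) := by
      rw [← mono.lt_iff_lt, h1]
      omega
    have h3 : x (j+1) ≤ x (x⁻¹ (x j + 1)) := mono.le_iff_le.2 (by omega)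
    rw [h1] at h3
    have := h j
    omega
  have base : ∀ j : ℤ, x j = x 0 + j := by
    intro j
    induction j using Int.induction_on with
    | zero => simp
    | succ k ih => rw [step k, ih]; ring
    | pred k ih =>
      have := step (-(k:ℤ) - 1)
      have e : -(k:ℤ) - 1 + 1 = -(k:ℤ) := by ring
      rw [e, ih] at this
      omega
  have hsum := hx.2
  have hconst : ∀ i ∈ Finset.Icc (1:ℤ) (n:ℤ), x i - i = x 0 := by
    intro i _
    rw [base i]; ring
  rw [Finset.sum_congr rfl hconst, Finset.sum_const] at hsum
  have hcard : (Finset.Icc (1:ℤ) (n:ℤ)).card = n := by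
    rw [Int.card_Icc]
    simp
  rw [hcard] at hsum
  have hx0 : x 0 = 0 := by
    have hz : (n:ℤ) * x 0 = 0 := by
      rw [nsmul_eq_mul] at hsum
      exact hsum
    have hnz : (n:ℤ) ≠ 0 := by
      have : (1:ℤ) ≤ (n:ℤ) := by exact_mod_cast hn
      omega
    rcases mul_eq_zero.1 hz with hh | hh
    · exact absurd hh hnz
    · exact hh
  ext k
  rw [base k, hx0]
  simp

lemma affLen_smul_asc (n : ℕ) (hn : 2 ≤ n) (x : Equiv.Perm ℤ) (hx : IsAffine n x)
    (j : ℤ) (h : x⁻¹ j < x⁻¹ (j+1)) :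
    affLen n (sPerm n j * x) = affLen n x + 1 := by
  have hn1 : 1 ≤ n := by omega
  have h1 : (sPerm n j * x)⁻¹ = x⁻¹ * sPerm n j := by
    rw [mul_inv_rev, sP_inv n hn j]
  have h2 := affLen_succ n hn x⁻¹ (IsAffine.inv hn1 hx) j h
  rw [← h1] at h2
  rw [← affLen_inv n hn1 x hx, ← h2,
    affLen_inv n hn1 (sPerm n j * x)
      (IsAffine.mul hn1 (isAffine_sPerm n hn j) hx)]

lemma affLen_smul_desc (n : ℕ) (hn : 2 ≤ n) (x : Equiv.Perm ℤ) (hx : IsAffine n x)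
    (j : ℤ) (h : x⁻¹ (j+1) < x⁻¹ j) :
    affLen n x = affLen n (sPerm n j * x) + 1 := by
  have hn1 : 1 ≤ n := by omega
  have h1 : (sPerm n j * x)⁻¹ = x⁻¹ * sPerm n j := by
    rw [mul_inv_rev, sP_inv n hn j]
  have h2 := affLen_pred n hn x⁻¹ (IsAffine.inv hn1 hx) j h
  rw [← h1] at h2
  rw [← affLen_inv n hn1 x hx, h2,
    affLen_inv n hn1 (sPerm n j * x)
      (IsAffine.mul hn1 (isAffine_sPerm n hn j) hx)]

end Aux
namespace Aux

lemma D_left_asc (n : ℕ) (hn : 2 ≤ n) (D : Equiv.Perm ℤ → Equiv.Perm ℤ → Equiv.Perm ℤ)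
    (hD : IsDemazure n D) :
    ∀ N : ℕ, ∀ x : Equiv.Perm ℤ, IsAffine n x → affLen n x = N → ∀ j : ℤ,
      x⁻¹ j < x⁻¹ (j+1) → D (sPerm n j) x = sPerm n j * x := by
  have hn1 : 1 ≤ n := by omega
  obtain ⟨hassoc, hclosed, hunit, hsimple⟩ := hD
  intro N
  induction N using Nat.strong_induction_on with
  | _ N IH =>
    intro x hx hlen j hj
    have hsaff : IsAffine n (sPerm n j) := isAffine_sPerm n hn j
    by_cases hall : ∀ k : ℤ, x k < x (k+1)
    · -- x = 1
      have hx1 : x = 1 := eq_one_of_increasing n hn1 x hx hall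
      subst hx1
      rw [(hunit (sPerm n j) hsaff).1, mul_one]
    · push_neg at hall
      obtain ⟨k, hk⟩ := hall
      have hkdesc : x (k+1) < x k :=
        lt_of_le_of_ne hk (fun h => apply_ne_succ x k h.symm)
      set x' := x * sPerm n k with hx'def
      have hx'aff : IsAffine n x' := IsAffine.mul hn1 hx (isAffine_sPerm n hn k)
      have hlen1 : affLen n x = affLen n x' + 1 := affLen_pred n hn x hx k hkdesc
      have hx's : x' * sPerm n k = x := by
        rw [hx'def, mul_assoc, sP_sq n hn k, mul_one]
      have hDx : D x' (sPerm n k) = x := by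
        have := (hsimple x' hx'aff k).2 (by rw [hx's]; omega)
        rw [this, hx's]
      have hsx : affLen n (sPerm n j * x) = affLen n x + 1 :=
        affLen_smul_asc n hn x hx j hj
      have hne' : x'⁻¹ j ≠ x'⁻¹ (j+1) := by
        intro h
        have := x'⁻¹.injective h
        omega
      -- associativity step
      have hstep : D (sPerm n j) x = D (D (sPerm n j) x') (sPerm n k) := by
        conv_lhs => rw [← hDx]
        rw [hassoc (sPerm n j) x' (sPerm n k) hsaff hx'aff (isAffine_sPerm n hn k)]
      rcases lt_or_gt_of_ne hne' with hcase | hcase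
      · -- ascent for x'
        have hIH : D (sPerm n j) x' = sPerm n j * x' := by
          apply IH (affLen n x') (by omega) x' hx'aff rfl j hcase
        have hsx' : affLen n (sPerm n j * x') = affLen n x' + 1 :=
          affLen_smul_asc n hn x' hx'aff j hcase
        have hsxaff : IsAffine n (sPerm n j * x') := IsAffine.mul hn1 hsaff hx'aff
        have hprod : (sPerm n j * x') * sPerm n k = sPerm n j * x := by
          rw [mul_assoc, hx's]
        have hfin : D (sPerm n j * x') (sPerm n k) = sPerm n j * x := by
          have := (hsimple (sPerm n j * x') hsxaff k).2 (by rw [hprod]; omega)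
          rw [this, hprod]
        rw [hstep, hIH, hfin]
      · -- descent for x' : contradiction with lengths
        exfalso
        have hdesc : affLen n x' = affLen n (sPerm n j * x') + 1 :=
          affLen_smul_desc n hn x' hx'aff j hcase
        set z := sPerm n j * x' with hzdef
        have hzaff : IsAffine n z := IsAffine.mul hn1 hsaff hx'aff
        have hzs : z * sPerm n k = sPerm n j * x := by
          rw [hzdef, mul_assoc, hx's]
        have hzne : z k ≠ z (k+1) := apply_ne_succ z k
        rcases lt_or_gt_of_ne hzne with hc | hc
        · have := affLen_succ n hn z hzaff k hc
          rw [hzs] at this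
          omega
        · have := affLen_pred n hn z hzaff k hc
          rw [hzs] at this
          omega

lemma D_left_desc (n : ℕ) (hn : 2 ≤ n) (D : Equiv.Perm ℤ → Equiv.Perm ℤ → Equiv.Perm ℤ)
    (hD : IsDemazure n D) (x : Equiv.Perm ℤ) (hx : IsAffine n x) (j : ℤ)
    (hj : x⁻¹ (j+1) < x⁻¹ j) : D (sPerm n j) x = x := by
  have hn1 : 1 ≤ n := by omega
  have hsaff : IsAffine n (sPerm n j) := isAffine_sPerm n hn j
  set y := sPerm n j * x with hydef
  have hyaff : IsAffine n y := IsAffine.mul hn1 hsaff hx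
  have hyinv : y⁻¹ = x⁻¹ * sPerm n j := by
    rw [hydef, mul_inv_rev, sP_inv n hn j]
  have hyj : y⁻¹ j = x⁻¹ (j+1) := by
    rw [hyinv]
    show x⁻¹ (sPerm n j j) = x⁻¹ (j+1)
    rw [sP_at]
  have hyj1 : y⁻¹ (j+1) = x⁻¹ j := by
    rw [hyinv]
    show x⁻¹ (sPerm n j (j+1)) = x⁻¹ j
    rw [sP_at' n hn]
  have hasc : D (sPerm n j) y = sPerm n j * y :=
    D_left_asc n hn D hD (affLen n y) y hyaff rfl j (by rw [hyj, hyj1]; exact hj)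
  have hsy : sPerm n j * y = x := by
    rw [hydef, ← mul_assoc, sP_sq n hn j, one_mul]
  have hss : D (sPerm n j) (sPerm n j) = sPerm n j := by
    have h1 : sPerm n j * sPerm n j = 1 := sP_sq n hn j
    have := (hD.2.2.2 (sPerm n j) hsaff j).1 (by
      rw [h1, affLen_one, affLen_sPerm n hn j]
      omega)
    exact this
  have hx_eq : x = D (sPerm n j) y := by rw [hasc, hsy]
  rw [hx_eq, ← hD.1 (sPerm n j) (sPerm n j) y hsaff hsaff hyaff, hss]

end Aux
/-- If `z ∈ Ĩ_n` and `w ∈ A(z)`, then no `i ∈ ℤ` has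
`w⁻¹ i > w⁻¹ (i+1) > w⁻¹ (i+2)`: atom inverses are 321-avoiding at consecutive
positions. -/
theorem atom_no_consecutive_321 (n : ℕ) (hn : 2 ≤ n)
    (D : Equiv.Perm ℤ → Equiv.Perm ℤ → Equiv.Perm ℤ) (hD : IsDemazure n D)
    (z : Equiv.Perm ℤ) (hz : IsAffine n z) (hzinv : ∀ x : ℤ, z (z x) = x)
    (w : Equiv.Perm ℤ) (hw : IsAtomOf n D z w) (i : ℤ) :
    ¬ (w⁻¹ (i + 2) < w⁻¹ (i + 1) ∧ w⁻¹ (i + 1) < w⁻¹ i) := by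
  rintro ⟨hc1, hc2⟩
  obtain ⟨hwaff, hwz, hmin⟩ := hw
  have hn1 : 1 ≤ n := by omega
  rcases eq_or_lt_of_le hn with hn2 | hn3'
  · -- case n = 2 : impossible by periodicity
    have hper := Aux.aff_inv_per n w hwaff.1 i
    have hcast : ((n:ℕ):ℤ) = 2 := by exact_mod_cast hn2.symm
    rw [hcast] at hper
    omega
  · -- case n ≥ 3
    have hn3 : 3 ≤ n := hn3'
    have ndvd1 : ¬ (n:ℤ) ∣ 1 := by
      intro h
      have := Int.le_of_dvd one_pos h
      omega
    have ndvd2 : ¬ (n:ℤ) ∣ 2 := by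
      intro h
      have := Int.le_of_dvd (by norm_num) h
      have : (3:ℤ) ≤ n := by exact_mod_cast hn3
      omega
    -- values of the simple reflections s = s_i and t = s_{i+1}
    have hsi : sPerm n i i = i + 1 := Aux.sP_at n i
    have hsi1 : sPerm n i (i+1) = i := Aux.sP_at' n hn i
    have hsi2 : sPerm n i (i+2) = i + 2 := by
      apply Aux.sP_fix
      · intro h
        rw [show i + 2 - i = 2 by ring] at h
        exact ndvd2 h
      · intro h
        rw [show i + 2 - (i+1) = 1 by ring] at h
        exact ndvd1 h
    have hti : sPerm n (i+1) i = i := by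
      apply Aux.sP_fix
      · intro h
        rw [show i - (i+1) = -1 by ring] at h
        exact ndvd1 ((dvd_neg).1 h)
      · intro h
        rw [show i - (i+1+1) = -2 by ring] at h
        exact ndvd2 ((dvd_neg).1 h)
    have hti1 : sPerm n (i+1) (i+1) = i + 2 := by
      rw [Aux.sP_at n (i+1)]; ring
    have hti2 : sPerm n (i+1) (i+2) = i + 1 := by
      rw [show i + 2 = (i+1)+1 by ring, Aux.sP_at' n hn (i+1)]
    -- the elements v, m, r
    set A := w⁻¹ i with hA
    set B := w⁻¹ (i+1) with hB
    set C := w⁻¹ (i+2) with hC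
    have hsaff : IsAffine n (sPerm n i) := Aux.isAffine_sPerm n hn i
    have htaff : IsAffine n (sPerm n (i+1)) := Aux.isAffine_sPerm n hn (i+1)
    set v := sPerm n i * w with hvdef
    have hvaff : IsAffine n v := Aux.IsAffine.mul hn1 hsaff hwaff
    set m := sPerm n (i+1) * v with hmdef
    have hmaff : IsAffine n m := Aux.IsAffine.mul hn1 htaff hvaff
    set r := sPerm n i * m with hrdef
    have hraff : IsAffine n r := Aux.IsAffine.mul hn1 hsaff hmaff
    have hwiaff : IsAffine n w⁻¹ := Aux.IsAffine.inv hn1 hwaff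
    have hviaff : IsAffine n v⁻¹ := Aux.IsAffine.inv hn1 hvaff
    -- inverses
    have hvinv : v⁻¹ = w⁻¹ * sPerm n i := by
      rw [hvdef, mul_inv_rev, Aux.sP_inv n hn i]
    have hminv : m⁻¹ = v⁻¹ * sPerm n (i+1) := by
      rw [hmdef, mul_inv_rev, Aux.sP_inv n hn (i+1)]
    have hrinv : r⁻¹ = m⁻¹ * sPerm n i := by
      rw [hrdef, mul_inv_rev, Aux.sP_inv n hn i]
    -- inverse values
    have hv_i : v⁻¹ i = B := by rw [hvinv]; show w⁻¹ (sPerm n i i) = B; rw [hsi]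
    have hv_i1 : v⁻¹ (i+1) = A := by rw [hvinv]; show w⁻¹ (sPerm n i (i+1)) = A; rw [hsi1]
    have hv_i2 : v⁻¹ (i+2) = C := by rw [hvinv]; show w⁻¹ (sPerm n i (i+2)) = C; rw [hsi2]
    have hm_i : m⁻¹ i = B := by rw [hminv]; show v⁻¹ (sPerm n (i+1) i) = B; rw [hti, hv_i]
    have hm_i1 : m⁻¹ (i+1) = C := by
      rw [hminv]; show v⁻¹ (sPerm n (i+1) (i+1)) = C; rw [hti1, hv_i2]
    have hm_i2 : m⁻¹ (i+2) = A := by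
      rw [hminv]; show v⁻¹ (sPerm n (i+1) (i+2)) = A; rw [hti2, hv_i1]
    have hr_i : r⁻¹ i = C := by rw [hrinv]; show m⁻¹ (sPerm n i i) = C; rw [hsi, hm_i1]
    have hr_i1 : r⁻¹ (i+1) = B := by
      rw [hrinv]; show m⁻¹ (sPerm n i (i+1)) = B; rw [hsi1, hm_i]
    -- length ladder
    have hLw : affLen n w = affLen n v + 1 :=
      Aux.affLen_smul_desc n hn w hwaff i hc2
    have hLv : affLen n v = affLen n m + 1 :=
      Aux.affLen_smul_desc n hn v hvaff (i+1) (by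
        rw [show i + 1 + 1 = i + 2 by ring, hv_i2, hv_i1]; omega)
    have hLm : affLen n m = affLen n r + 1 :=
      Aux.affLen_smul_desc n hn m hmaff i (by rw [hm_i1, hm_i]; omega)
    have hLtw : affLen n w = affLen n (sPerm n (i+1) * w) + 1 :=
      Aux.affLen_smul_desc n hn w hwaff (i+1) (by
        rw [show i + 1 + 1 = i + 2 by ring]; exact hc1)
    -- Demazure single-step identities
    have hassoc := hD.1
    have hsimple := hD.2.2.2
    have d1 : D (sPerm n i) v = w := by
      rw [Aux.D_left_asc n hn D hD (affLen n v) v hvaff rfl i (by rw [hv_i, hv_i1]; omega),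
        hvdef, ← mul_assoc, Aux.sP_sq n hn i, one_mul]
    have d2 : D (sPerm n (i+1)) m = v := by
      rw [Aux.D_left_asc n hn D hD (affLen n m) m hmaff rfl (i+1) (by
        rw [show i + 1 + 1 = i + 2 by ring, hm_i1, hm_i2]; omega),
        hmdef, ← mul_assoc, Aux.sP_sq n hn (i+1), one_mul]
    have d3 : D (sPerm n i) r = m := by
      rw [Aux.D_left_asc n hn D hD (affLen n r) r hraff rfl i (by rw [hr_i, hr_i1]; omega),
        hrdef, ← mul_assoc, Aux.sP_sq n hn i, one_mul]
    have ew : w⁻¹ * sPerm n i = v⁻¹ := hvinv.symm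
    have d4 : D w⁻¹ (sPerm n i) = w⁻¹ := by
      apply (hsimple w⁻¹ hwiaff i).1
      rw [ew, Aux.affLen_inv n hn1 v hvaff, Aux.affLen_inv n hn1 w hwaff]
      omega
    have d5 : D w⁻¹ (sPerm n (i+1)) = w⁻¹ := by
      apply (hsimple w⁻¹ hwiaff (i+1)).1
      have e : w⁻¹ * sPerm n (i+1) = (sPerm n (i+1) * w)⁻¹ := by
        rw [mul_inv_rev, Aux.sP_inv n hn (i+1)]
      rw [e, Aux.affLen_inv n hn1 (sPerm n (i+1) * w)
          (Aux.IsAffine.mul hn1 htaff hwaff),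
        Aux.affLen_inv n hn1 w hwaff]
      omega
    have d6 : D v⁻¹ (sPerm n i) = w⁻¹ := by
      have h1 : v⁻¹ * sPerm n i = w⁻¹ := by
        rw [hvinv, mul_assoc, Aux.sP_sq n hn i, mul_one]
      have := (hsimple v⁻¹ hviaff i).2 (by
        rw [h1, Aux.affLen_inv n hn1 v hvaff, Aux.affLen_inv n hn1 w hwaff]
        omega)
      rw [this, h1]
    have d7 : D v⁻¹ (sPerm n (i+1)) = v⁻¹ := by
      apply (hsimple v⁻¹ hviaff (i+1)).1
      rw [← hminv, Aux.affLen_inv n hn1 m hmaff, Aux.affLen_inv n hn1 v hvaff]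
      omega
    -- the two chains
    have zchain : z = D w⁻¹ r := by
      calc z = D w⁻¹ w := hwz.symm
        _ = D w⁻¹ (D (sPerm n i) v) := by rw [d1]
        _ = D (D w⁻¹ (sPerm n i)) v := (hassoc w⁻¹ (sPerm n i) v hwiaff hsaff hvaff).symm
        _ = D w⁻¹ v := by rw [d4]
        _ = D w⁻¹ (D (sPerm n (i+1)) m) := by rw [d2]
        _ = D (D w⁻¹ (sPerm n (i+1))) m := (hassoc w⁻¹ (sPerm n (i+1)) m hwiaff htaff hmaff).symm
        _ = D w⁻¹ m := by rw [d5]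
        _ = D w⁻¹ (D (sPerm n i) r) := by rw [d3]
        _ = D (D w⁻¹ (sPerm n i)) r := (hassoc w⁻¹ (sPerm n i) r hwiaff hsaff hraff).symm
        _ = D w⁻¹ r := by rw [d4]
    have vchain : D v⁻¹ v = D w⁻¹ r := by
      calc D v⁻¹ v = D v⁻¹ (D (sPerm n (i+1)) m) := by rw [d2]
        _ = D (D v⁻¹ (sPerm n (i+1))) m := (hassoc v⁻¹ (sPerm n (i+1)) m hviaff htaff hmaff).symm
        _ = D v⁻¹ m := by rw [d7]
        _ = D v⁻¹ (D (sPerm n i) r) := by rw [d3]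
        _ = D (D v⁻¹ (sPerm n i)) r := (hassoc v⁻¹ (sPerm n i) r hviaff hsaff hraff).symm
        _ = D w⁻¹ r := by rw [d6]
    have hvz : D v⁻¹ v = z := by rw [vchain, ← zchain]
    have := hmin v hvaff hvz
    omega
end
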